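/- arXiv:1512.02685 — 6 statements merged into one kernel-verified Lean document; each statement's English description precedes it below -/
import Mathlib

section
/- Let q = 2 and n ≥ 2. In the rational function field F_2(t), the identity Σ_{k=0}^{n-2} (1/D_{n-k})^{2^k} · (1/L_k) = [n-1] / (L_n · [1]^{2^{n-1}}) holds. -/
/-- `[m] = t^{2^m} - t ∈ F_2[t]`. -/
noncomputable def br (m : ℕ) : Polynomial (ZMod 2) :=
  Polynomial.X ^ (2 ^ m) - Polynomial.X

/-- The Carlitz factorial `D_n`: `D_0 = 1`, `D_n = [n]·D_{n-1}²`. -/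
noncomputable def carlitzD : ℕ → Polynomial (ZMod 2)
  | 0 => 1
  | n + 1 => br (n + 1) * (carlitzD n) ^ 2

/-- The Carlitz factorial `L_n`: `L_0 = 1`, `L_n = [n]·L_{n-1}`. -/
noncomputable def carlitzL : ℕ → Polynomial (ZMod 2)
  | 0 => 1
  | n + 1 => br (n + 1) * carlitzL n

lemma br_ne_zero (m : ℕ) (hm : 1 ≤ m) : br m ≠ 0 := by
  intro h
  have h2 : (2:ℕ) ^ m ≠ 1 := by
    have : 2 ≤ 2 ^ m := Nat.one_lt_two_pow (by omega)
    omega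
  have := congrArg (fun p => Polynomial.coeff p (2 ^ m)) h
  simp [br, Polynomial.coeff_X, h2, Ne.symm h2] at this

lemma carlitzD_ne_zero (n : ℕ) : carlitzD n ≠ 0 := by
  induction n with
  | zero => simp [carlitzD]
  | succ n ih =>
    simp only [carlitzD]
    exact mul_ne_zero (br_ne_zero _ (by omega)) (pow_ne_zero _ ih)

lemma carlitzL_ne_zero (n : ℕ) : carlitzL n ≠ 0 := by
  induction n with
  | zero => simp [carlitzL]
  | succ n ih =>
    simp only [carlitzL]
    exact mul_ne_zero (br_ne_zero _ (by omega)) ih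

lemma br_pow (a b : ℕ) : br a ^ 2 ^ b = br (a + b) - br b := by
  simp only [br]
  rw [sub_pow_char_pow (p := 2), ← pow_mul, ← pow_add]
  ring

noncomputable abbrev φ : Polynomial (ZMod 2) →+* RatFunc (ZMod 2) :=
  (algebraMap (Polynomial (ZMod 2)) (RatFunc (ZMod 2)))

lemma phi_ne_zero {p : Polynomial (ZMod 2)} (hp : p ≠ 0) : φ p ≠ 0 := by
  simpa using (RatFunc.algebraMap_ne_zero hp)

lemma partial_sum (n k : ℕ) (hk : k + 2 ≤ n) :
    ∑ j ∈ Finset.range (k + 1),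
        (1 / φ (carlitzD (n - j))) ^ 2 ^ j * (1 / φ (carlitzL j)) =
      1 / (φ (carlitzD (n - k - 1)) ^ 2 ^ (k + 1) * φ (carlitzL k) * φ (br n)) := by
  induction k with
  | zero =>
    obtain ⟨m, rfl⟩ : ∃ m, n = m + 2 := ⟨n - 2, by omega⟩
    have hD : carlitzD (m + 2) = br (m + 2) * carlitzD (m + 1) ^ 2 := rfl
    rw [Finset.sum_range_one]
    simp only [show m + 2 - 0 = m + 2 by omega, show m + 2 - 0 - 1 = m + 1 by omega,
      show m + 2 - 1 = m + 1 by omega]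
    rw [hD]
    have hb := phi_ne_zero (br_ne_zero (m + 2) (by omega))
    have hd := phi_ne_zero (carlitzD_ne_zero (m + 1))
    simp only [carlitzL, map_mul, map_pow, map_one, pow_one]
    field_simp
    rw [pow_zero, pow_one, zero_add, pow_one, one_div, mul_inv, ← mul_assoc, mul_inv_cancel₀ hb,
      one_mul, inv_mul_cancel₀ (pow_ne_zero 2 hd)]
  | succ k ih =>
    have hk' : k + 2 ≤ n := by omega
    obtain ⟨m, rfl⟩ : ∃ m, n = m + k + 3 := ⟨n - k - 3, by omega⟩
    rw [Finset.sum_range_succ, ih hk']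
    have e1 : m + k + 3 - k - 1 = m + 2 := by omega
    have e2 : m + k + 3 - (k + 1) = m + 2 := by omega
    simp only [e1, e2, show m + k + 3 - (k + 1) - 1 = m + 1 by omega,
      show m + 2 - 1 = m + 1 by omega, show k + 1 + 1 = k + 2 by omega]
    have hD : carlitzD (m + 2) = br (m + 2) * carlitzD (m + 1) ^ 2 := rfl
    have hL : carlitzL (k + 1) = br (k + 1) * carlitzL k := rfl
    haveI hchar : CharP (RatFunc (ZMod 2)) 2 :=
      charP_of_injective_ringHom (RatFunc.algebraMap_injective (ZMod 2)) 2
    haveI : Fact (Nat.Prime 2) := ⟨Nat.prime_two⟩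
    have hbr : φ (br (m + 2)) ^ 2 ^ (k + 1) = φ (br (m + k + 3)) + φ (br (k + 1)) := by
      rw [← map_pow, br_pow, show m + 2 + (k + 1) = m + k + 3 by omega, map_sub,
        CharTwo.sub_eq_add]
    have key : φ (carlitzD (m + 2)) ^ 2 ^ (k + 1) =
        (φ (br (m + k + 3)) + φ (br (k + 1))) * φ (carlitzD (m + 1)) ^ 2 ^ (k + 2) := by
      rw [hD, map_mul, map_pow, mul_pow, hbr, ← pow_mul, show 2 * 2 ^ (k + 1) = 2 ^ (k + 2)
        from by rw [pow_succ]; ring]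
    have hsum : φ (br (m + k + 3)) + φ (br (k + 1)) ≠ 0 := by
      rw [← hbr]
      exact pow_ne_zero _ (phi_ne_zero (br_ne_zero (m + 2) (by omega)))
    have hbn := phi_ne_zero (br_ne_zero (m + k + 3) (by omega))
    have hbk := phi_ne_zero (br_ne_zero (k + 1) (by omega))
    have hd := phi_ne_zero (carlitzD_ne_zero (m + 1))
    have hlk := phi_ne_zero (carlitzL_ne_zero k)
    have hA := pow_ne_zero (2 ^ (k + 2)) hd
    have hX : (φ (br (m + k + 3)) + φ (br (k + 1))) * φ (carlitzD (m + 1)) ^ 2 ^ (k + 2) *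
        φ (carlitzL k) * φ (br (m + k + 3)) ≠ 0 :=
      mul_ne_zero (mul_ne_zero (mul_ne_zero hsum hA) hlk) hbn
    have hY : (φ (br (m + k + 3)) + φ (br (k + 1))) * φ (carlitzD (m + 1)) ^ 2 ^ (k + 2) *
        (φ (br (k + 1)) * φ (carlitzL k)) ≠ 0 :=
      mul_ne_zero (mul_ne_zero hsum hA) (mul_ne_zero hbk hlk)
    have hZ : φ (carlitzD (m + 1)) ^ 2 ^ (k + 2) * (φ (br (k + 1)) * φ (carlitzL k)) *
        φ (br (m + k + 3)) ≠ 0 :=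
      mul_ne_zero (mul_ne_zero hA (mul_ne_zero hbk hlk)) hbn
    rw [div_pow, one_pow, key, hL, map_mul, one_div, one_div, one_div, ← mul_inv,
      inv_add_inv hX hY, div_eq_div_iff (mul_ne_zero hX hY) hZ]
    ring

/-- (q = 2, n ≥ 2) In `F_2(t)`,
`Σ_{k=0}^{n-2} (1/D_{n-k})^{2^k} · (1/L_k) = [n-1] / (L_n · [1]^{2^{n-1}})`. -/
theorem stmt_5 (n : ℕ) (hn : 2 ≤ n) :
    ∑ k ∈ Finset.range (n - 1),
        (1 / algebraMap (Polynomial (ZMod 2)) (RatFunc (ZMod 2)) (carlitzD (n - k))) ^ (2 ^ k) *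
          (1 / algebraMap (Polynomial (ZMod 2)) (RatFunc (ZMod 2)) (carlitzL k)) =
      algebraMap (Polynomial (ZMod 2)) (RatFunc (ZMod 2)) (br (n - 1)) /
        (algebraMap (Polynomial (ZMod 2)) (RatFunc (ZMod 2)) (carlitzL n) *
          algebraMap (Polynomial (ZMod 2)) (RatFunc (ZMod 2)) (br 1) ^ (2 ^ (n - 1))) := by
  obtain ⟨k, rfl⟩ : ∃ k, n = k + 2 := ⟨n - 2, by omega⟩
  have e1 : k + 2 - 1 = k + 1 := by omega
  have e2 : k + 2 - k - 1 = 1 := by omega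
  rw [e1]
  have hps := partial_sum (k + 2) k (le_refl _)
  rw [e2] at hps
  rw [hps]
  have hD1 : carlitzD 1 = br 1 := by simp [carlitzD]
  have hL2 : carlitzL (k + 2) = br (k + 2) * (br (k + 1) * carlitzL k) := rfl
  rw [hD1, hL2]
  have hb1 := phi_ne_zero (br_ne_zero 1 (by omega))
  have hbk1 := phi_ne_zero (br_ne_zero (k + 1) (by omega))
  have hbk2 := phi_ne_zero (br_ne_zero (k + 2) (by omega))
  have hlk := phi_ne_zero (carlitzL_ne_zero k)
  simp only [map_mul]
  field_simp
end

section
/- Let q be a power of a prime p, let d ≥ 1, and let k be a positive multiple of q-1. Then P_d(k) lies in the subfield of F_q(t) generated by t^{q-1} (over the prime subfield), and P_d(k) also lies in the subfield of F_q(t) generated by [1] = t^q - t (over the prime subfield). -/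
/-- `P_d(k) = Σ 1/(1 - ℘^k) ∈ F_q(t)`, the (finite) sum over all monic irreducible
`℘ ∈ F_q[t]` of degree `d`. -/
noncomputable def Pd (Fq : Type*) [Field Fq] (d k : ℕ) : RatFunc Fq :=
  ∑ᶠ ℘ ∈ {P : Polynomial Fq | P.Monic ∧ Irreducible P ∧ P.natDegree = d},
    (1 - algebraMap (Polynomial Fq) (RatFunc Fq) ℘ ^ k)⁻¹

namespace Stmt8Aux

open Polynomial
open scoped Classical

variable {Fq : Type*} [Field Fq] [Fintype Fq]

lemma setFinite (Fq : Type*) [Field Fq] [Fintype Fq] (d : ℕ) :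
    {P : Polynomial Fq | P.Monic ∧ Irreducible P ∧ P.natDegree = d}.Finite := by
  apply Set.Finite.of_finite_image (f := fun P : Polynomial Fq => fun i : Fin (d + 1) => P.coeff i)
    (Set.toFinite _)
  intro P hP Q hQ h
  ext n
  rcases lt_or_ge n (d + 1) with hn | hn
  · simpa using congrFun h ⟨n, hn⟩
  · rw [Polynomial.coeff_eq_zero_of_natDegree_lt, Polynomial.coeff_eq_zero_of_natDegree_lt]
    · rw [hQ.2.2]; omega
    · rw [hP.2.2]; omega

variable (Fq) in
/-- The finite set of monic irreducible polynomials of degree `d`. -/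
noncomputable def SF (d : ℕ) : Finset (Polynomial Fq) := (setFinite Fq d).toFinset

lemma mem_SF {d : ℕ} {P : Polynomial Fq} :
    P ∈ SF Fq d ↔ P.Monic ∧ Irreducible P ∧ P.natDegree = d := by
  simp [SF, Set.Finite.mem_toFinset]

variable (Fq) in
/-- The common denominator. -/
noncomputable def Bpoly (d k : ℕ) : Polynomial Fq := ∏ P ∈ SF Fq d, (1 - P ^ k)

variable (Fq) in
/-- The numerator. -/
noncomputable def Apoly (d k : ℕ) : Polynomial Fq :=
  ∑ P ∈ SF Fq d, ∏ Q ∈ (SF Fq d).erase P, (1 - Q ^ k)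

section Invariance

/-- Generic invariance: a ring hom acting on the terms via a self-bijection of `SF`
fixes `Bpoly` and `Apoly`. -/
lemma invariance {d k : ℕ} {F : Type*} [FunLike F (Polynomial Fq) (Polynomial Fq)]
    [RingHomClass F (Polynomial Fq) (Polynomial Fq)] (e : F)
    (m m' : Polynomial Fq → Polynomial Fq)
    (hm : ∀ P ∈ SF Fq d, m P ∈ SF Fq d) (hm' : ∀ P ∈ SF Fq d, m' P ∈ SF Fq d)
    (h1 : ∀ P ∈ SF Fq d, m' (m P) = P) (h2 : ∀ P ∈ SF Fq d, m (m' P) = P)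
    (hterm : ∀ P ∈ SF Fq d, e (1 - P ^ k) = 1 - m P ^ k) :
    e (Bpoly Fq d k) = Bpoly Fq d k ∧ e (Apoly Fq d k) = Apoly Fq d k := by
  constructor
  · rw [Bpoly, map_prod]
    refine (Finset.prod_congr rfl hterm).trans ?_
    exact Finset.prod_nbij' m m' hm hm' h1 h2 (fun P _ => rfl)
  · rw [Apoly, map_sum]
    have inner : ∀ P ∈ SF Fq d,
        e (∏ Q ∈ (SF Fq d).erase P, (1 - Q ^ k))
          = ∏ Q ∈ (SF Fq d).erase (m P), (1 - Q ^ k) := by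
      intro P hP
      rw [map_prod]
      refine (Finset.prod_congr rfl
        (fun Q hQ => hterm Q (Finset.mem_of_mem_erase hQ))).trans ?_
      refine Finset.prod_nbij' m m' ?_ ?_ ?_ ?_ (fun Q _ => rfl)
      · intro Q hQ
        rcases Finset.mem_erase.mp hQ with ⟨hne, hQS⟩
        refine Finset.mem_erase.mpr ⟨fun hEq => hne ?_, hm Q hQS⟩
        rw [← h1 Q hQS, hEq, h1 P hP]
      · intro Q hQ
        rcases Finset.mem_erase.mp hQ with ⟨hne, hQS⟩
        refine Finset.mem_erase.mpr ⟨fun hEq => hne ?_, hm' Q hQS⟩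
        rw [← h2 Q hQS, hEq]
      · intro Q hQ; exact h1 Q (Finset.mem_of_mem_erase hQ)
      · intro Q hQ; exact h2 Q (Finset.mem_of_mem_erase hQ)
    refine (Finset.sum_congr rfl inner).trans ?_
    exact Finset.sum_nbij' m m' hm hm' h1 h2 (fun P _ => rfl)

lemma tau_mem (d : ℕ) (b : Fq) : ∀ P ∈ SF Fq d, P.comp (X + C b) ∈ SF Fq d := by
  intro P hP
  rcases mem_SF.mp hP with ⟨hmon, hirr, hdeg⟩
  refine mem_SF.mpr ⟨hmon.comp_X_add_C _, ?_, ?_⟩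
  · have h : P.comp (X + C b) = algEquivAevalXAddC b P := rfl
    rw [h]
    exact (MulEquiv.irreducible_iff (algEquivAevalXAddC b)).mpr hirr
  · rw [natDegree_comp, natDegree_X_add_C, mul_one, hdeg]

lemma tau_inv (b : Fq) (P : Polynomial Fq) :
    (P.comp (X + C b)).comp (X + C (-b)) = P := by
  rw [comp_assoc]
  have h : (X + C b).comp (X + C (-b)) = (X : Polynomial Fq) := by
    rw [add_comp, X_comp, C_comp, C_neg]
    ring
  rw [h, comp_X]

/-- Invariance under translation `t ↦ t + a`. -/
lemma BA_tau (d k : ℕ) (a : Fq) :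
    (Bpoly Fq d k).comp (X + C a) = Bpoly Fq d k ∧
      (Apoly Fq d k).comp (X + C a) = Apoly Fq d k := by
  have happ : ∀ P : Polynomial Fq, algEquivAevalXAddC a P = P.comp (X + C a) := fun P => rfl
  have key := invariance (d := d) (k := k) (algEquivAevalXAddC a)
    (fun P => P.comp (X + C a)) (fun P => P.comp (X + C (-a)))
    (tau_mem d a) (tau_mem d (-a))
    (fun P _ => tau_inv a P)
    (fun P _ => by simpa using tau_inv (-a) P)
    (fun P _ => by simp [happ, sub_comp, one_comp, pow_comp])
  simpa [happ] using key

/-- Invariance under coefficientwise Frobenius. -/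
lemma BA_phi (p : ℕ) [Fact p.Prime] [CharP Fq p] (d k : ℕ) :
    (Bpoly Fq d k).map (frobenius Fq p) = Bpoly Fq d k ∧
      (Apoly Fq d k).map (frobenius Fq p) = Apoly Fq d k := by
  have hco : ((frobeniusEquiv Fq p : Fq ≃+* Fq) : Fq →+* Fq) = frobenius Fq p := rfl
  have hcomp : (((frobeniusEquiv Fq p).symm : Fq ≃+* Fq) : Fq →+* Fq).comp (frobenius Fq p)
      = RingHom.id Fq := by
    ext x; exact frobeniusEquiv_symm_apply_frobenius Fq p x
  have hcomp' : (frobenius Fq p).comp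
      (((frobeniusEquiv Fq p).symm : Fq ≃+* Fq) : Fq →+* Fq) = RingHom.id Fq := by
    ext x; exact frobenius_apply_frobeniusEquiv_symm Fq p x
  have hmem1 : ∀ P ∈ SF Fq d, P.map (frobenius Fq p) ∈ SF Fq d := by
    intro P hP
    rcases mem_SF.mp hP with ⟨hmon, hirr, hdeg⟩
    refine mem_SF.mpr ⟨hmon.map _, ?_, ?_⟩
    · have h : P.map (frobenius Fq p) = mapEquiv (frobeniusEquiv Fq p) P := by
        rw [mapEquiv_apply, hco]
      rw [h]
      exact (MulEquiv.irreducible_iff (mapEquiv (frobeniusEquiv Fq p))).mpr hirr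
    · rw [hmon.natDegree_map, hdeg]
  have hmem2 : ∀ P ∈ SF Fq d,
      P.map (((frobeniusEquiv Fq p).symm : Fq ≃+* Fq) : Fq →+* Fq) ∈ SF Fq d := by
    intro P hP
    rcases mem_SF.mp hP with ⟨hmon, hirr, hdeg⟩
    refine mem_SF.mpr ⟨hmon.map _, ?_, ?_⟩
    · have h : P.map (((frobeniusEquiv Fq p).symm : Fq ≃+* Fq) : Fq →+* Fq)
          = mapEquiv ((frobeniusEquiv Fq p).symm : Fq ≃+* Fq) P := by
        rw [mapEquiv_apply]
      rw [h]
      exact (MulEquiv.irreducible_iff _).mpr hirr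
    · rw [hmon.natDegree_map, hdeg]
  have key := invariance (d := d) (k := k) (mapRingHom (frobenius Fq p))
    (fun P => P.map (frobenius Fq p))
    (fun P => P.map (((frobeniusEquiv Fq p).symm : Fq ≃+* Fq) : Fq →+* Fq))
    hmem1 hmem2
    (fun P _ => by simp only [Polynomial.map_map, hcomp, Polynomial.map_id])
    (fun P _ => by simp only [Polynomial.map_map, hcomp', Polynomial.map_id])
    (fun P _ => by
      simp [Polynomial.map_sub, Polynomial.map_one, Polynomial.map_pow])
  simpa using key

lemma coeff_comp_C_mul_X (c : Fq) (P : Polynomial Fq) (n : ℕ) :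
    (P.comp (C c * X)).coeff n = c ^ n * P.coeff n := by
  induction P using Polynomial.induction_on' with
  | add p q hp hq => simp [add_comp, hp, hq, mul_add]
  | monomial i a =>
    rw [← C_mul_X_pow_eq_monomial, mul_comp, C_comp, pow_comp, X_comp, mul_pow, ← C_pow,
      ← mul_assoc, ← C_mul, coeff_C_mul, coeff_C_mul, coeff_X_pow]
    by_cases h : n = i
    · subst h; simp [mul_comm]
    · simp [h]

variable (Fq) in
/-- Normalization of `P(ct)` to a monic polynomial. -/
noncomputable def mSig (d : ℕ) (c : Fqˣ) (P : Polynomial Fq) : Polynomial Fq :=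
  C (((c : Fq) ^ d)⁻¹) * P.comp (C (c : Fq) * X)

lemma comp_eq_C_mul_mSig (d : ℕ) (c : Fqˣ) (P : Polynomial Fq) :
    P.comp (C (c : Fq) * X) = C ((c : Fq) ^ d) * mSig Fq d c P := by
  rw [mSig, ← mul_assoc, ← C_mul, mul_inv_cancel₀ (pow_ne_zero _ c.ne_zero), C_1, one_mul]

lemma mSig_inv (d : ℕ) (c : Fqˣ) (P : Polynomial Fq) :
    mSig Fq d c⁻¹ (mSig Fq d c P) = P := by
  rw [mSig, mSig, mul_comp, C_comp, comp_assoc, mul_comp, C_comp, X_comp,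
    ← mul_assoc (C ((c : Fq)) : Polynomial Fq), ← C_mul]
  have h1 : (c : Fq) * ((c⁻¹ : Fqˣ) : Fq) = 1 := by
    rw [← Units.val_mul, mul_inv_cancel, Units.val_one]
  rw [h1, C_1, one_mul, comp_X, ← mul_assoc, ← C_mul]
  have h2 : (((c⁻¹ : Fqˣ) : Fq) ^ d)⁻¹ * ((c : Fq) ^ d)⁻¹ = 1 := by
    rw [← mul_inv, ← mul_pow]
    have h3 : ((c⁻¹ : Fqˣ) : Fq) * (c : Fq) = 1 := by
      rw [← Units.val_mul, inv_mul_cancel, Units.val_one]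
    rw [h3, one_pow, inv_one]
  rw [h2, C_1, one_mul]

lemma sigma_mem (d : ℕ) (c : Fqˣ) : ∀ P ∈ SF Fq d, mSig Fq d c P ∈ SF Fq d := by
  intro P hP
  rcases mem_SF.mp hP with ⟨hmon, hirr, hdeg⟩
  have hcd : ((c : Fq) ^ d) ≠ 0 := pow_ne_zero _ c.ne_zero
  have hcoeffd : (P.comp (C (c : Fq) * X)).coeff d = (c : Fq) ^ d := by
    rw [coeff_comp_C_mul_X, ← hdeg, hmon.coeff_natDegree, mul_one]
  have hcomp_ne : P.comp (C (c : Fq) * X) ≠ 0 := by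
    intro h0
    rw [h0, coeff_zero] at hcoeffd
    exact hcd hcoeffd.symm
  have hnd : (P.comp (C (c : Fq) * X)).natDegree = d := by
    rw [natDegree_comp, natDegree_C_mul_X _ c.ne_zero, mul_one, hdeg]
  have hndS : (mSig Fq d c P).natDegree = d := by
    rw [mSig, natDegree_C_mul (inv_ne_zero hcd), hnd]
  have hmonic : (mSig Fq d c P).Monic := by
    unfold Monic leadingCoeff
    rw [hndS, mSig, coeff_C_mul, hcoeffd, inv_mul_cancel₀ hcd]
  refine mem_SF.mpr ⟨hmonic, ?_, hndS⟩
  have hXc : ((C (c : Fq) * X : Polynomial Fq)).comp (C ((c : Fq))⁻¹ * X) = X := by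
    rw [mul_comp, C_comp, X_comp, ← mul_assoc, ← C_mul,
      mul_inv_cancel₀ c.ne_zero, C_1, one_mul]
  have hXc' : ((C ((c : Fq))⁻¹ * X : Polynomial Fq)).comp (C (c : Fq) * X) = X := by
    rw [mul_comp, C_comp, X_comp, ← mul_assoc, ← C_mul,
      inv_mul_cancel₀ c.ne_zero, C_1, one_mul]
  have hirr' : Irreducible (P.comp (C (c : Fq) * X)) := by
    have h : P.comp (C (c : Fq) * X)
        = algEquivOfCompEqX (C (c : Fq) * X) (C ((c : Fq))⁻¹ * X) hXc hXc' P := rfl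
    rw [h]
    exact (MulEquiv.irreducible_iff _).mpr hirr
  have hu : IsUnit (C (((c : Fq) ^ d)⁻¹) : Polynomial Fq) :=
    isUnit_C.mpr (isUnit_iff_ne_zero.mpr (inv_ne_zero hcd))
  rw [mSig, ← hu.unit_spec]
  exact (irreducible_units_mul hu.unit).mpr hirr'

/-- Invariance under dilation `t ↦ ct`. -/
lemma BA_sigma (d k : ℕ) (hdvd : Fintype.card Fq - 1 ∣ k) (c : Fqˣ) :
    (Bpoly Fq d k).comp (C (c : Fq) * X) = Bpoly Fq d k ∧
      (Apoly Fq d k).comp (C (c : Fq) * X) = Apoly Fq d k := by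
  have hXc : ((C (c : Fq) * X : Polynomial Fq)).comp (C ((c : Fq))⁻¹ * X) = X := by
    rw [mul_comp, C_comp, X_comp, ← mul_assoc, ← C_mul,
      mul_inv_cancel₀ c.ne_zero, C_1, one_mul]
  have hXc' : ((C ((c : Fq))⁻¹ * X : Polynomial Fq)).comp (C (c : Fq) * X) = X := by
    rw [mul_comp, C_comp, X_comp, ← mul_assoc, ← C_mul,
      inv_mul_cancel₀ c.ne_zero, C_1, one_mul]
  set e := algEquivOfCompEqX (C (c : Fq) * X) (C ((c : Fq))⁻¹ * X) hXc hXc' with he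
  have happ : ∀ P : Polynomial Fq, e P = P.comp (C (c : Fq) * X) := fun P => rfl
  have hck : (c : Fq) ^ k = 1 := by
    obtain ⟨s, rfl⟩ := hdvd
    rw [pow_mul, FiniteField.pow_card_sub_one_eq_one (c : Fq) c.ne_zero, one_pow]
  have key := invariance (d := d) (k := k) e (mSig Fq d c) (mSig Fq d c⁻¹)
    (sigma_mem d c) (sigma_mem d c⁻¹)
    (fun P _ => mSig_inv d c P)
    (fun P _ => by simpa using mSig_inv d c⁻¹ P)
    (fun P _ => by
      rw [happ, sub_comp, one_comp, pow_comp, comp_eq_C_mul_mSig d c P, mul_pow, ← C_pow]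
      have h4 : ((c : Fq) ^ d) ^ k = 1 := by
        rw [← pow_mul, mul_comm d k, pow_mul, hck, one_pow]
      rw [h4, C_1, one_mul])
  simpa [happ] using key

end Invariance

section PrimeField

/-- Elements fixed by `x ↦ x ^ p` are natural-number casts. -/
lemma exists_natCast (p : ℕ) [Fact p.Prime] [CharP Fq p] {a : Fq} (ha : a ^ p = a) :
    ∃ n : ℕ, a = (n : Fq) := by
  haveI : NeZero p := ⟨(Fact.out : p.Prime).ne_zero⟩
  have hp2 : 1 < p := (Fact.out : p.Prime).one_lt
  set f : ZMod p →+* Fq := ZMod.castHom (dvd_refl p) Fq with hf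
  set T : Finset Fq := Finset.univ.image (fun i : ZMod p => f i) with hT
  have hTcard : T.card = p := by
    rw [hT, Finset.card_image_of_injective _ f.injective, Finset.card_univ, ZMod.card]
  have hdegXp : (X ^ p - X : Polynomial Fq).natDegree = p := by
    rw [natDegree_sub_eq_left_of_natDegree_lt] <;>
      simp [natDegree_X_pow, natDegree_X, hp2]
  have hne : (X ^ p - X : Polynomial Fq) ≠ 0 := by
    intro h0
    rw [h0, natDegree_zero] at hdegXp
    omega
  have hroots : ∀ b ∈ insert a T, (X ^ p - X : Polynomial Fq).eval b = 0 := by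
    intro b hb
    rcases Finset.mem_insert.mp hb with rfl | hb
    · simp [ha]
    · rcases Finset.mem_image.mp hb with ⟨i, _, rfl⟩
      have h : f i ^ p = f i := by
        rw [← map_pow, ZMod.pow_card]
      simp [h]
  have haT : a ∈ T := by
    by_contra hnot
    have hcard : (insert a T).card = p + 1 := by
      rw [Finset.card_insert_of_notMem hnot, hTcard]
    have h0 := Polynomial.eq_zero_of_natDegree_lt_card_of_eval_eq_zero' _ _ hroots
      (by rw [hdegXp, hcard]; omega)
    exact hne h0
  rcases Finset.mem_image.mp haT with ⟨i, _, rfl⟩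
  refine ⟨i.val, ?_⟩
  have h : ((i.val : ℕ) : ZMod p) = i := ZMod.natCast_rightInverse i
  rw [← map_natCast f i.val, h]

end PrimeField

section Membership

/-- Membership in the subfield generated by `X ^ (q-1)`. -/
lemma memK1 (F : Polynomial Fq)
    (hdvd : ∀ n, F.coeff n ≠ 0 → (Fintype.card Fq - 1) ∣ n)
    (hnat : ∀ n, ∃ m : ℕ, F.coeff n = (m : Fq)) :
    algebraMap (Polynomial Fq) (RatFunc Fq) F ∈
      Subfield.closure {(RatFunc.X : RatFunc Fq) ^ (Fintype.card Fq - 1)} := by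
  set K := Subfield.closure {(RatFunc.X : RatFunc Fq) ^ (Fintype.card Fq - 1)} with hK
  rw [F.as_sum_range, map_sum]
  refine Subfield.sum_mem K ?_
  intro i _
  by_cases h0 : F.coeff i = 0
  · simp only [h0, map_zero, monomial_zero_right]
    exact zero_mem K
  · obtain ⟨m0, hm0⟩ := hdvd i h0
    obtain ⟨mc, hmc⟩ := hnat i
    rw [← C_mul_X_pow_eq_monomial, map_mul, map_pow, hmc]
    refine Subfield.mul_mem K ?_ ?_
    · rw [Polynomial.C_eq_natCast, map_natCast]
      exact natCast_mem K mc
    · rw [RatFunc.algebraMap_X, hm0, pow_mul]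
      exact Subfield.pow_mem K (Subfield.subset_closure (Set.mem_singleton _)) m0

lemma const_of_tau {F : Polynomial Fq} (hdeg : F.natDegree < Fintype.card Fq)
    (htau : ∀ a : Fq, F.comp (X + C a) = F) : F = C (F.eval 0) := by
  have heval : ∀ b : Fq, F.eval b = F.eval 0 := by
    intro b
    have h : (F.comp (X + C b)).eval 0 = F.eval b := by
      rw [eval_comp]; simp
    rw [htau b] at h
    exact h.symm
  have hz : F - C (F.eval 0) = 0 := by
    apply Polynomial.eq_zero_of_natDegree_lt_card_of_eval_eq_zero' _ Finset.univ
    · intro b _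
      simp [heval b]
    · calc (F - C (F.eval 0)).natDegree ≤ max F.natDegree (C (F.eval 0)).natDegree :=
            natDegree_sub_le _ _
        _ < Fintype.card Fq := by
            rw [natDegree_C]; simpa using hdeg
        _ ≤ Finset.univ.card := by rw [Finset.card_univ]
  exact sub_eq_zero.mp hz

/-- Membership in the subfield generated by `X ^ q - X`. -/
lemma memK2 (p : ℕ) [Fact p.Prime] [CharP Fq p] :
    ∀ (n : ℕ) (F : Polynomial Fq), F.natDegree ≤ n →
      (∀ a : Fq, F.comp (X + C a) = F) → F.map (frobenius Fq p) = F →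
      algebraMap (Polynomial Fq) (RatFunc Fq) F ∈
        Subfield.closure {(RatFunc.X : RatFunc Fq) ^ Fintype.card Fq - RatFunc.X} := by
  set q := Fintype.card Fq with hq
  have hq2 : 2 ≤ q := Fintype.one_lt_card
  set K := Subfield.closure {(RatFunc.X : RatFunc Fq) ^ q - RatFunc.X} with hK
  intro n
  induction n using Nat.strong_induction_on with
  | _ n ih =>
    intro F hdeg htau hphi
    have hconst_case : ∀ G : Polynomial Fq, G.natDegree < q →
        (∀ a : Fq, G.comp (X + C a) = G) → G.map (frobenius Fq p) = G →
        algebraMap (Polynomial Fq) (RatFunc Fq) G ∈ K := by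
      intro G hGdeg hGtau hGphi
      have hGc : G = C (G.eval 0) := const_of_tau hGdeg hGtau
      have hpow : (G.eval 0) ^ p = G.eval 0 := by
        have h := congrArg (fun h => h.coeff 0) hGphi
        simp only [coeff_map] at h
        rw [frobenius_def] at h
        rw [← coeff_zero_eq_eval_zero]
        exact h
      obtain ⟨m, hm⟩ := exists_natCast p hpow
      rw [hGc, hm, Polynomial.C_eq_natCast, map_natCast]
      exact natCast_mem K m
    by_cases hsmall : F.natDegree < q
    · exact hconst_case F hsmall htau hphi
    push_neg at hsmall
    -- divide by Φ = X^q - X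
    set Φ : Polynomial Fq := X ^ q - X with hΦ
    have hΦm : Φ.Monic := by
      apply (monic_X_pow q).sub_of_left
      rw [degree_X_pow, degree_X]
      exact_mod_cast by omega
    have hΦdeg : Φ.natDegree = q := by
      rw [hΦ, natDegree_sub_eq_left_of_natDegree_lt] <;>
        simp [natDegree_X_pow, natDegree_X] <;> omega
    set Q := F /ₘ Φ with hQdef
    set R := F %ₘ Φ with hRdef
    have hQR : R + Φ * Q = F := modByMonic_add_div F Φ
    have hRlt : R.degree < Φ.degree := degree_modByMonic_lt F hΦm
    -- Φ is invariant
    have hΦtau : ∀ a : Fq, Φ.comp (X + C a) = Φ := by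
      intro a
      obtain ⟨m, hpp, hqm⟩ := FiniteField.card Fq p
      rw [hΦ, sub_comp, pow_comp, X_comp]
      have hXa : ((X + C a : Polynomial Fq)) ^ q = X ^ q + C (a ^ q) := by
        rw [hq, hqm, add_pow_char_pow, C_pow]
      rw [hXa, hq, FiniteField.pow_card a]
      ring
    have hΦphi : Φ.map (frobenius Fq p) = Φ := by
      rw [hΦ]
      simp [Polynomial.map_sub, Polynomial.map_pow, map_X]
    -- transfer invariance to Q and R via uniqueness of division
    have huniq_tau : ∀ a : Fq, Q.comp (X + C a) = Q ∧ R.comp (X + C a) = R := by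
      intro a
      have hdegR' : (R.comp (X + C a)).degree < Φ.degree := by
        by_cases hR0 : R = 0
        · rw [hR0, zero_comp]
          exact lt_of_le_of_lt (by simp) hRlt
        · have h1 : R.comp (X + C a) ≠ 0 := comp_X_add_C_ne_zero_iff.mpr hR0
          rw [degree_eq_natDegree h1, natDegree_comp, natDegree_X_add_C, mul_one,
            ← degree_eq_natDegree hR0]
          exact hRlt
      have heq : R.comp (X + C a) + Φ * Q.comp (X + C a) = F := by
        have h := congrArg (fun G => G.comp (X + C a)) hQR
        simpa [add_comp, mul_comp, hΦtau a, htau a] using h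
      obtain ⟨h1, h2⟩ := div_modByMonic_unique (Q.comp (X + C a)) (R.comp (X + C a)) hΦm
        ⟨heq, hdegR'⟩
      exact ⟨h1.symm, h2.symm⟩
    have huniq_phi : Q.map (frobenius Fq p) = Q ∧ R.map (frobenius Fq p) = R := by
      have hdegR' : (R.map (frobenius Fq p)).degree < Φ.degree :=
        lt_of_le_of_lt (degree_map_le) hRlt
      have heq : R.map (frobenius Fq p) + Φ * Q.map (frobenius Fq p) = F := by
        have h := congrArg (fun G => G.map (frobenius Fq p)) hQR
        simpa [Polynomial.map_add, Polynomial.map_mul, hΦphi, hphi] using h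
      obtain ⟨h1, h2⟩ := div_modByMonic_unique (Q.map (frobenius Fq p))
        (R.map (frobenius Fq p)) hΦm ⟨heq, hdegR'⟩
      exact ⟨h1.symm, h2.symm⟩
    -- R is a constant in the prime field
    have hRdeg : R.natDegree < q := by
      by_cases hR0 : R = 0
      · rw [hR0, natDegree_zero]; omega
      · have h := hRlt
        rw [degree_eq_natDegree hR0, degree_eq_natDegree hΦm.ne_zero, hΦdeg] at h
        exact_mod_cast h
    have hRmem : algebraMap (Polynomial Fq) (RatFunc Fq) R ∈ K :=
      hconst_case R hRdeg (fun a => (huniq_tau a).2) huniq_phi.2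
    -- Q has smaller degree; apply induction
    have hQdeg : Q.natDegree = F.natDegree - q := by
      rw [hQdef, natDegree_divByMonic F hΦm, hΦdeg]
    have hQmem : algebraMap (Polynomial Fq) (RatFunc Fq) Q ∈ K := by
      refine ih (n - q) ?_ Q ?_ (fun a => (huniq_tau a).1) huniq_phi.1
      · omega
      · omega
    -- Φ maps into K
    have hΦmem : algebraMap (Polynomial Fq) (RatFunc Fq) Φ ∈ K := by
      rw [hΦ, map_sub, map_pow, RatFunc.algebraMap_X]
      exact Subfield.subset_closure (Set.mem_singleton _)
    have hfin : algebraMap (Polynomial Fq) (RatFunc Fq) F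
        = algebraMap (Polynomial Fq) (RatFunc Fq) R
          + algebraMap (Polynomial Fq) (RatFunc Fq) Φ
            * algebraMap (Polynomial Fq) (RatFunc Fq) Q := by
      rw [← map_mul, ← map_add, hQR]
    rw [hfin]
    exact Subfield.add_mem K hRmem (Subfield.mul_mem K hΦmem hQmem)

end Membership

section PdEq

lemma term_ne_zero {d k : ℕ} (hd : 1 ≤ d) (hk : 0 < k) {P : Polynomial Fq} (hP : P ∈ SF Fq d) :
    (1 - P ^ k : Polynomial Fq) ≠ 0 := by
  rcases mem_SF.mp hP with ⟨hmon, _, hdeg⟩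
  intro h0
  have hPk : P ^ k = 1 := by
    have := sub_eq_zero.mp h0
    exact this.symm
  have hnd := hmon.natDegree_pow (n := k)
  rw [hPk, natDegree_one, hdeg] at hnd
  have h2 : k * d ≠ 0 := Nat.mul_ne_zero (by omega) (by omega)
  exact h2 hnd.symm

lemma Pd_eq (d k : ℕ) (hd : 1 ≤ d) (hk : 0 < k) :
    Pd Fq d k = algebraMap (Polynomial Fq) (RatFunc Fq) (Apoly Fq d k)
      * (algebraMap (Polynomial Fq) (RatFunc Fq) (Bpoly Fq d k))⁻¹ := by
  have halg : ∀ G : Polynomial Fq, (1 : RatFunc Fq)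
      - algebraMap (Polynomial Fq) (RatFunc Fq) G ^ k
      = algebraMap (Polynomial Fq) (RatFunc Fq) (1 - G ^ k) := by
    intro G; rw [map_sub, map_one, map_pow]
  have hPd : Pd Fq d k = ∑ P ∈ SF Fq d,
      (1 - algebraMap (Polynomial Fq) (RatFunc Fq) P ^ k)⁻¹ := by
    rw [Pd, ← (setFinite Fq d).coe_toFinset, finsum_mem_coe_finset]
    rfl
  have hBne : algebraMap (Polynomial Fq) (RatFunc Fq) (Bpoly Fq d k) ≠ 0 := by
    rw [Ne, map_eq_zero_iff _ (RatFunc.algebraMap_injective Fq), Bpoly,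
      Finset.prod_eq_zero_iff]
    push_neg
    intro P hP
    exact term_ne_zero hd hk hP
  rw [eq_mul_inv_iff_mul_eq₀ hBne, hPd, Bpoly, map_prod, Apoly, map_sum, Finset.sum_mul]
  apply Finset.sum_congr rfl
  intro P hP
  rw [map_prod]
  have hterm_ne : algebraMap (Polynomial Fq) (RatFunc Fq) (1 - P ^ k) ≠ 0 := by
    rw [Ne, map_eq_zero_iff _ (RatFunc.algebraMap_injective Fq)]
    exact term_ne_zero hd hk hP
  rw [← Finset.mul_prod_erase _ _ hP, halg P, inv_mul_cancel_left₀ hterm_ne]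

end PdEq

end Stmt8Aux

open Polynomial in
/-- For `d ≥ 1` and `k` a positive multiple of `q - 1`, `P_d(k)` lies both in the subfield
of `F_q(t)` generated by `t^{q-1}` and in the subfield generated by `[1] = t^q - t`. -/
theorem stmt_8 (Fq : Type*) [Field Fq] [Fintype Fq] (d k : ℕ) (hd : 1 ≤ d) (hk : 0 < k)
    (hdvd : Fintype.card Fq - 1 ∣ k) :
    Pd Fq d k ∈ Subfield.closure {(RatFunc.X : RatFunc Fq) ^ (Fintype.card Fq - 1)} ∧
    Pd Fq d k ∈ Subfield.closure
      {(RatFunc.X : RatFunc Fq) ^ Fintype.card Fq - RatFunc.X} := by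
  classical
  set p := ringChar Fq with hp
  haveI : CharP Fq p := ringChar.charP Fq
  haveI : Fact p.Prime := ⟨CharP.char_is_prime Fq p⟩
  set q := Fintype.card Fq with hq
  -- invariance facts
  have hsigma := fun c : Fqˣ => Stmt8Aux.BA_sigma (Fq := Fq) d k hdvd c
  have htau := fun a : Fq => Stmt8Aux.BA_tau (Fq := Fq) d k a
  have hphi := Stmt8Aux.BA_phi (Fq := Fq) p d k
  -- coefficient facts
  have hnatB : ∀ n, ∃ m : ℕ, (Stmt8Aux.Bpoly Fq d k).coeff n = (m : Fq) := by
    intro n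
    apply Stmt8Aux.exists_natCast p
    have h := congrArg (fun h => h.coeff n) hphi.1
    simpa [Polynomial.coeff_map, frobenius_def] using h
  have hnatA : ∀ n, ∃ m : ℕ, (Stmt8Aux.Apoly Fq d k).coeff n = (m : Fq) := by
    intro n
    apply Stmt8Aux.exists_natCast p
    have h := congrArg (fun h => h.coeff n) hphi.2
    simpa [Polynomial.coeff_map, frobenius_def] using h
  have hdvd_coeff : ∀ (F : Polynomial Fq),
      (∀ c : Fqˣ, F.comp (Polynomial.C (c : Fq) * Polynomial.X) = F) →
      ∀ n, F.coeff n ≠ 0 → (q - 1) ∣ n := by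
    intro F hF n hn
    have hpow : ∀ c : Fqˣ, (c : Fq) ^ n = 1 := by
      intro c
      have h := congrArg (fun G => Polynomial.coeff G n) (hF c)
      simp only [Stmt8Aux.coeff_comp_C_mul_X] at h
      have h1 : ((c : Fq) ^ n) * F.coeff n = 1 * F.coeff n := by rw [one_mul]; exact h
      exact mul_right_cancel₀ hn h1
    obtain ⟨g, hg⟩ := IsCyclic.exists_generator (α := Fqˣ)
    have hgn : g ^ n = 1 := by
      ext
      push_cast
      exact hpow g
    have h2 := orderOf_dvd_of_pow_eq_one hgn
    rw [orderOf_eq_card_of_forall_mem_zpowers hg] at h2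
    rwa [Nat.card_eq_fintype_card, Fintype.card_units, ← hq] at h2
  have hkey := Stmt8Aux.Pd_eq (Fq := Fq) d k hd hk
  constructor
  · -- subfield generated by X^(q-1)
    set K := Subfield.closure {(RatFunc.X : RatFunc Fq) ^ (q - 1)} with hK
    have hmemB : algebraMap (Polynomial Fq) (RatFunc Fq) (Stmt8Aux.Bpoly Fq d k) ∈ K :=
      Stmt8Aux.memK1 _ (hdvd_coeff _ (fun c => (hsigma c).1)) hnatB
    have hmemA : algebraMap (Polynomial Fq) (RatFunc Fq) (Stmt8Aux.Apoly Fq d k) ∈ K :=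
      Stmt8Aux.memK1 _ (hdvd_coeff _ (fun c => (hsigma c).2)) hnatA
    rw [hkey]
    exact Subfield.mul_mem K hmemA (Subfield.inv_mem K hmemB)
  · -- subfield generated by X^q - X
    set K := Subfield.closure {(RatFunc.X : RatFunc Fq) ^ q - RatFunc.X} with hK
    have hmemB : algebraMap (Polynomial Fq) (RatFunc Fq) (Stmt8Aux.Bpoly Fq d k) ∈ K :=
      Stmt8Aux.memK2 p _ _ le_rfl (fun a => (htau a).1) hphi.1
    have hmemA : algebraMap (Polynomial Fq) (RatFunc Fq) (Stmt8Aux.Apoly Fq d k) ∈ K :=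
      Stmt8Aux.memK2 p _ _ le_rfl (fun a => (htau a).2) hphi.2
    rw [hkey]
    exact Subfield.mul_mem K hmemA (Subfield.inv_mem K hmemB)
end

section
/- Let q be a power of a prime p, let d ≥ 1, and let k be a positive multiple of q-1. Then P_d(k) ≠ 0 with valuation at infinity p_d(k) equal to kd if and only if either (I) q is prime, q divides d, and d is squarefree, or (II) q = 2 and d = 4m for some odd squarefree natural number m. -/
namespace Stmt10

open Polynomial Finset ArithmeticFunction

variable (Fq : Type*) [Field Fq] [Fintype Fq]

lemma finite_S (e : ℕ) :
    {P : Polynomial Fq | P.Monic ∧ Irreducible P ∧ P.natDegree = e}.Finite := by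
  have hinj : Set.InjOn (fun P : Polynomial Fq => fun i : Fin (e + 1) => P.coeff i)
      {P : Polynomial Fq | P.Monic ∧ Irreducible P ∧ P.natDegree = e} := by
    intro P hP Q hQ h
    ext n
    rcases le_or_gt n e with hn | hn
    · exact congrFun h ⟨n, Nat.lt_succ_of_le hn⟩
    · rw [Polynomial.coeff_eq_zero_of_natDegree_lt (by rw [hP.2.2]; exact hn),
        Polynomial.coeff_eq_zero_of_natDegree_lt (by rw [hQ.2.2]; exact hn)]
  exact Set.Finite.of_finite_image (Set.toFinite _) hinj

noncomputable def T (e : ℕ) : Finset (Polynomial Fq) := (finite_S Fq e).toFinset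

lemma mem_T {e : ℕ} {P : Polynomial Fq} :
    P ∈ T Fq e ↔ P.Monic ∧ Irreducible P ∧ P.natDegree = e := by
  simp only [T, Set.Finite.mem_toFinset, Set.mem_setOf_eq]

noncomputable def Nc (e : ℕ) : ℕ := (T Fq e).card

lemma galois_dvd_galois {R : Type*} [CommRing R] {q e n : ℕ} (hq : 2 ≤ q)
    (hen : e ∣ n) : (X ^ q ^ e - X : R[X]) ∣ X ^ q ^ n - X := by
  obtain ⟨t, rfl⟩ := hen
  have hqe : 1 ≤ q ^ e := Nat.one_le_pow _ _ (by omega)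
  have hqn : 1 ≤ q ^ (e * t) := Nat.one_le_pow _ _ (by omega)
  have h1 : q ^ e - 1 ∣ q ^ (e * t) - 1 := by
    have := Nat.sub_dvd_pow_sub_pow (q ^ e) 1 t
    simpa [← pow_mul] using this
  obtain ⟨u, hu⟩ := h1
  have h2 : (X ^ (q ^ e - 1) - 1 : R[X]) ∣ X ^ (q ^ (e * t) - 1) - 1 := by
    have := sub_dvd_pow_sub_pow (X ^ (q ^ e - 1) : R[X]) 1 u
    simpa [← pow_mul, ← hu] using this
  have key : ∀ m : ℕ, 1 ≤ m → (X ^ m - X : R[X]) = X * (X ^ (m - 1) - 1) := by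
    intro m hm
    have h : m - 1 + 1 = m := Nat.succ_pred_eq_of_pos hm
    rw [mul_sub, mul_one, ← pow_succ', h]
  rw [key _ hqe, key _ hqn]
  exact mul_dvd_mul_left _ h2

lemma squarefree_prod_primes {s : Finset ℕ} (hs : ∀ p ∈ s, p.Prime) :
    Squarefree (∏ p ∈ s, p) := by
  induction s using Finset.cons_induction with
  | empty => simpa using squarefree_one
  | cons a s ha ih =>
    rw [Finset.prod_cons]
    have hcop : Nat.Coprime a (∏ p ∈ s, p) :=
      Nat.Coprime.prod_right fun q hq =>
        (Nat.coprime_primes (hs a (Finset.mem_cons_self a s)) (hs q (Finset.mem_cons_of_mem hq))).2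
          (by rintro rfl; exact ha hq)
    exact (Nat.squarefree_mul hcop).2
      ⟨(hs a (Finset.mem_cons_self a s)).squarefree, ih fun p hp => hs p (Finset.mem_cons_of_mem hp)⟩

lemma two_pow_gt {c : ℕ} (hc : 3 ≤ c) : c + 1 ≤ 2 ^ (c - 1) := by
  induction c with
  | zero => omega
  | succ n ih =>
    rcases Nat.lt_or_ge n 3 with h | h
    · interval_cases n <;> simp_all <;> omega
    · have := ih (by omega)
      have h2 : 2 ^ (n - 1) ≤ 2 ^ (n + 1 - 1) := Nat.pow_le_pow_right (by omega) (by omega)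
      have h3 : 2 ^ (n+1-1) = 2 * 2 ^ (n-1) := by
        rw [← pow_succ']
        congr 1
        omega
      omega


lemma counting (n : ℕ) (hn : 0 < n) :
    Fintype.card Fq ^ n = ∑ e ∈ n.divisors, e * Nc Fq e := by
  classical
  set q := Fintype.card Fq with hqdef
  have hq2 : 2 ≤ q := Fintype.one_lt_card
  obtain ⟨p, hpc⟩ := CharP.exists Fq
  haveI := hpc
  obtain ⟨a, hp, hqa⟩ := FiniteField.card Fq p
  haveI : Fact p.Prime := ⟨hp⟩
  set g : Polynomial Fq := X ^ q ^ n - X with hg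
  have hg0 : g ≠ 0 := FiniteField.X_pow_card_pow_sub_X_ne_zero _ hn.ne' hq2
  have hgdeg : g.natDegree = q ^ n := FiniteField.X_pow_card_pow_sub_X_natDegree_eq _ hn.ne' hq2
  have hpq' : p ∣ q := by rw [hqdef, hqa]; exact dvd_pow_self p a.ne_zero
  have hpq : p ∣ q ^ n := dvd_pow hpq' hn.ne'
  have hsep : g.Separable := galois_poly_separable p (q ^ n) hpq
  set K := g.SplittingField with hK
  haveI : CharP K p := charP_of_injective_algebraMap (algebraMap Fq K).injective p
  haveI : Finite K := Module.finite_of_finite Fq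
  haveI : Fintype K := Fintype.ofFinite K
  have hfix : ∀ x : K, x ^ q ^ n = x := by
    intro x
    have hx : x ∈ Algebra.adjoin Fq (g.rootSet K) := by
      rw [IsSplittingField.adjoin_rootSet K g]
      exact Algebra.mem_top
    have hqn : q ^ n = p ^ ((a : ℕ) * n) := by rw [hqdef, hqa, pow_mul]
    induction hx using Algebra.adjoin_induction with
    | mem y hy =>
        rw [mem_rootSet_of_ne hg0] at hy
        have h : y ^ q ^ n - y = 0 := by simpa [hg, map_sub, map_pow, aeval_X] using hy
        exact sub_eq_zero.mp h
    | algebraMap r => rw [← map_pow, FiniteField.pow_card_pow]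
    | add x y _ _ hx hy => rw [hqn, add_pow_char_pow, ← hqn, hx, hy]
    | mul x y _ _ hx hy => rw [mul_pow, hx, hy]
  have huniv : g.rootSet K = Set.univ := Set.eq_univ_of_forall fun x => by
    rw [mem_rootSet_of_ne hg0]
    simp [hg, map_sub, map_pow, aeval_X, hfix x, sub_self]
  have hcardK : Fintype.card K = q ^ n := by
    have key : Fintype.card (g.rootSet K) = g.natDegree :=
      card_rootSet_eq_natDegree hsep (SplittingField.splits g)
    rw [hgdeg] at key
    rw [← key]
    exact (Fintype.card_congr ((Equiv.setCongr huniv).trans (Equiv.Set.univ K))).symm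
  have hrank : Module.finrank Fq K = n := by
    have h := Module.card_eq_pow_finrank (K := Fq) (V := K)
    rw [hcardK] at h
    exact (Nat.pow_right_injective hq2 h).symm
  have hint : ∀ x : K, IsIntegral Fq x := fun x => IsIntegral.of_finite Fq x
  have Hmem : ∀ x : K, minpoly Fq x ∈ n.divisors.biUnion (T Fq) := by
    intro x
    refine Finset.mem_biUnion.2 ⟨(minpoly Fq x).natDegree, ?_, ?_⟩
    · exact Nat.mem_divisors.2 ⟨hrank ▸ minpoly.degree_dvd (hint x), hn.ne'⟩
    · exact (mem_T Fq).2 ⟨minpoly.monic (hint x), minpoly.irreducible (hint x), rfl⟩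
  have hfib := Finset.card_eq_sum_card_fiberwise (fun x (_ : x ∈ Finset.univ) => Hmem x)
  rw [Finset.card_univ, hcardK] at hfib
  have hdisj : (↑n.divisors : Set ℕ).PairwiseDisjoint (T Fq) := by
    intro e₁ _ e₂ _ hne
    simp only [Function.onFun, Finset.disjoint_left]
    intro P hP1 hP2
    exact hne (((mem_T Fq).1 hP1).2.2 ▸ ((mem_T Fq).1 hP2).2.2)
  rw [hfib, Finset.sum_biUnion hdisj]
  refine Finset.sum_congr rfl fun e he => ?_
  obtain ⟨hedvd, -⟩ := Nat.mem_divisors.1 he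
  have he0 : e ≠ 0 := by
    rintro rfl
    exact hn.ne' (Nat.eq_zero_of_zero_dvd hedvd)
  have hfibcard : ∀ P ∈ T Fq e,
      (Finset.univ.filter fun x : K => minpoly Fq x = P).card = e := by
    intro P hP
    obtain ⟨hmon, hirr, hdeg⟩ := (mem_T Fq).1 hP
    have hP0 : P ≠ 0 := hirr.ne_zero
    haveI : Fact (Irreducible P) := ⟨hirr⟩
    have hPe : P ∣ (X ^ q ^ e - X : Polynomial Fq) := by
      set L := AdjoinRoot P with hL
      haveI : Module.Finite Fq L := Module.Finite.of_basis (AdjoinRoot.powerBasis hP0).basis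
      haveI : Finite L := Module.finite_of_finite Fq
      haveI : Fintype L := Fintype.ofFinite L
      have hrL : Module.finrank Fq L = e := by
        rw [(AdjoinRoot.powerBasis hP0).finrank, AdjoinRoot.powerBasis_dim, hdeg]
      have hcL : Fintype.card L = q ^ e := by
        rw [Module.card_eq_pow_finrank (K := Fq) (V := L), hrL]
      have hroot : (aeval (AdjoinRoot.root P)) (X ^ q ^ e - X : Polynomial Fq) = 0 := by
        rw [map_sub, map_pow, aeval_X, ← hcL, FiniteField.pow_card, sub_self]
      have h := minpoly.dvd Fq (AdjoinRoot.root P) hroot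
      rwa [AdjoinRoot.minpoly_root hP0, hmon.leadingCoeff, inv_one, map_one, mul_one] at h
    have hPg : P ∣ g := hPe.trans (galois_dvd_galois hq2 hedvd)
    have hsplit : Splits (P.map (algebraMap Fq K)) :=
      (SplittingField.splits g).of_dvd (Polynomial.map_ne_zero hg0) (Polynomial.map_dvd _ hPg)
    have hcardroot : Fintype.card (P.rootSet K) = e := by
      rw [card_rootSet_eq_natDegree (hsep.of_dvd hPg) hsplit, hdeg]
    have hfilter : (Finset.univ.filter fun x : K => minpoly Fq x = P)
        = (P.rootSet K).toFinset := by
      ext x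
      simp only [Finset.mem_filter, Finset.mem_univ, true_and, Set.mem_toFinset,
        mem_rootSet_of_ne hP0]
      constructor
      · rintro rfl; exact minpoly.aeval Fq x
      · intro hax; exact (minpoly.eq_of_irreducible_of_monic hirr hax hmon).symm
    rw [hfilter, Set.toFinset_card, hcardroot]
  rw [Finset.sum_congr rfl hfibcard, Finset.sum_const, smul_eq_mul, Nc, mul_comm]


lemma moebius_count (d : ℕ) (hd : 0 < d) :
    ((d * Nc Fq d : ℕ) : ℤ) =
      ∑ x ∈ d.divisorsAntidiagonal, (moebius x.1) • ((Fintype.card Fq : ℤ) ^ x.2) := by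
  have H : ∀ n > 0, ∑ i ∈ n.divisors, ((i * Nc Fq i : ℕ) : ℤ) = ((Fintype.card Fq : ℤ) ^ n) := by
    intro n hn
    have h := counting Fq n hn
    push_cast
    exact_mod_cast h.symm
  exact ((ArithmeticFunction.sum_eq_iff_sum_smul_moebius_eq
    (f := fun i => ((i * Nc Fq i : ℕ) : ℤ))
    (g := fun n => ((Fintype.card Fq : ℤ) ^ n))).1 H d hd).symm

lemma part2 (p : ℕ) [hpc : CharP Fq p] (d : ℕ) (hd : 1 ≤ d) :
    (¬ p ∣ Nc Fq d) ↔
      ((Nat.Prime (Fintype.card Fq) ∧ Fintype.card Fq ∣ d ∧ Squarefree d) ∨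
        (Fintype.card Fq = 2 ∧ ∃ m : ℕ, Odd m ∧ Squarefree m ∧ d = 4 * m)) := by
  classical
  obtain ⟨a, hp, hqa⟩ := FiniteField.card Fq p
  have ha1 : 1 ≤ (a : ℕ) := a.one_le
  set q := Fintype.card Fq with hqdef
  have hd0 : d ≠ 0 := by omega
  set R := ∏ ℓ ∈ d.primeFactors, ℓ with hR
  have hRsq : Squarefree R := squarefree_prod_primes fun p hp => Nat.prime_of_mem_primeFactors hp
  have hRd : R ∣ d := Nat.prod_primeFactors_dvd d
  have hR0 : R ≠ 0 := hRsq.ne_zero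
  set e0 := d / R with he0def
  have he0R : e0 * R = d := Nat.div_mul_cancel hRd
  have he00 : e0 ≠ 0 := by
    rintro h
    rw [h, zero_mul] at he0R
    exact hd0 he0R.symm
  have he01 : 1 ≤ e0 := Nat.one_le_iff_ne_zero.2 he00
  set c := d.factorization p with hcdef
  -- factorization facts
  have hRfac : ∀ ℓ : ℕ, ℓ.Prime → R.factorization ℓ = if ℓ ∣ d then 1 else 0 := by
    intro ℓ hℓ
    split_ifs with hld
    · have h1 : ℓ ∣ R := Finset.dvd_prod_of_mem _ (Nat.mem_primeFactors.2 ⟨hℓ, hld, hd0⟩)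
      have h2 : R.factorization ℓ ≤ 1 :=
        (Nat.squarefree_iff_factorization_le_one hR0).1 hRsq ℓ
      have h3 : 1 ≤ R.factorization ℓ :=
        (Nat.Prime.factorization_pos_of_dvd hℓ hR0 h1)
      omega
    · exact Nat.factorization_eq_zero_of_not_dvd fun h => hld (h.trans hRd)
  have hfac : ∀ ℓ : ℕ, ℓ.Prime →
      d.factorization ℓ = e0.factorization ℓ + (if ℓ ∣ d then 1 else 0) := by
    intro ℓ hℓ
    conv_lhs => rw [← he0R]
    rw [Nat.factorization_mul he00 hR0]
    simp only [Finsupp.add_apply]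
    rw [hRfac ℓ hℓ]
  -- the key valuation facts
  have hmain := moebius_count Fq d hd
  have ht0 : (R, e0) ∈ d.divisorsAntidiagonal :=
    Nat.mem_divisorsAntidiagonal.2 ⟨by rw [mul_comm]; exact he0R, hd0⟩
  have hsplit := Finset.add_sum_erase _ (fun x : ℕ × ℕ => (moebius x.1) • ((q : ℤ) ^ x.2)) ht0
  have hdvd2 : ∀ x ∈ d.divisorsAntidiagonal.erase (R, e0),
      ((p : ℤ)) ^ ((a : ℕ) * e0 + 1) ∣ (moebius x.1) • ((q : ℤ) ^ x.2) := by
    intro x hx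
    obtain ⟨hxne, hxmem⟩ := Finset.mem_erase.1 hx
    obtain ⟨hxd, -⟩ := Nat.mem_divisorsAntidiagonal.1 hxmem
    rcases eq_or_ne (moebius x.1) 0 with h0 | h0
    · simp [h0]
    · have hsq : Squarefree x.1 := moebius_ne_zero_iff_squarefree.1 h0
      have hx10 : x.1 ≠ 0 := hsq.ne_zero
      have hx1R : x.1 ∣ R := by
        rw [← Nat.prod_primeFactors_of_squarefree hsq, hR]
        exact Finset.prod_dvd_prod_of_subset _ _ _
          (Nat.primeFactors_mono ⟨x.2, hxd.symm⟩ hd0)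
      obtain ⟨w, hw⟩ := hx1R
      have hw0 : w ≠ 0 := by
        rintro rfl
        rw [mul_zero] at hw
        exact hR0 hw
      have hx2 : x.2 = e0 * w := by
        have h : x.1 * x.2 = x.1 * (e0 * w) := by
          rw [hxd, ← he0R, hw]; ring
        exact Nat.eq_of_mul_eq_mul_left (Nat.pos_of_ne_zero hx10) h
      have hw1 : w ≠ 1 := by
        rintro rfl
        rw [mul_one] at hw
        rw [mul_one] at hx2
        exact hxne (Prod.ext hw.symm hx2)
      have hx2ge : e0 + 1 ≤ x.2 := by
        have hw2 : 2 ≤ w := by omega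
        have h := Nat.mul_le_mul_left e0 hw2
        omega
      have hqp : ((q : ℤ)) ^ x.2 = ((p : ℤ)) ^ ((a : ℕ) * x.2) := by
        rw [hqa]
        push_cast
        rw [← pow_mul]
      rw [zsmul_eq_mul, hqp]
      refine Dvd.dvd.mul_left (pow_dvd_pow _ ?_) _
      have : (a : ℕ) * (e0 + 1) ≤ (a : ℕ) * x.2 := Nat.mul_le_mul_left _ hx2ge
      nlinarith
  have hμR : moebius R = 1 ∨ moebius R = -1 :=
    moebius_ne_zero_iff_eq_or.1 (moebius_ne_zero_iff_squarefree.2 hRsq)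
  have hSsplit : ((d * Nc Fq d : ℕ) : ℤ)
      = (moebius R) • ((q : ℤ) ^ e0) + ∑ x ∈ d.divisorsAntidiagonal.erase (R, e0),
          (moebius x.1) • ((q : ℤ) ^ x.2) := by
    rw [hmain, ← hsplit]
  have hqe0 : ((q : ℤ)) ^ e0 = ((p : ℤ)) ^ ((a : ℕ) * e0) := by
    rw [hqa]; push_cast; rw [← pow_mul]
  have hdvdS : ((p : ℤ)) ^ ((a : ℕ) * e0) ∣ ((d * Nc Fq d : ℕ) : ℤ) := by
    rw [hSsplit]
    refine dvd_add ?_ (Finset.dvd_sum fun x hx => dvd_trans (pow_dvd_pow _ (by omega)) (hdvd2 x hx))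
    rw [zsmul_eq_mul, hqe0]
    exact Dvd.dvd.mul_left dvd_rfl _
  have hndvdS : ¬ ((p : ℤ)) ^ ((a : ℕ) * e0 + 1) ∣ ((d * Nc Fq d : ℕ) : ℤ) := by
    intro h
    rw [hSsplit] at h
    have h2 : ((p : ℤ)) ^ ((a : ℕ) * e0 + 1) ∣ (moebius R) • ((q : ℤ) ^ e0) := by
      have h' := dvd_sub h (Finset.dvd_sum hdvd2)
      simpa using h'
    rw [zsmul_eq_mul, hqe0] at h2
    have h3 : ((p : ℤ)) ^ ((a : ℕ) * e0 + 1) ∣ ((p : ℤ)) ^ ((a : ℕ) * e0) := by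
      rcases hμR with h' | h' <;> rw [h'] at h2
      · simpa using h2
      · simpa using h2.neg_right
    have h4 : ¬ IsUnit ((p : ℤ)) := by
      rw [Int.isUnit_iff]
      have := hp.two_le
      omega
    have hpz : ((p : ℤ)) ≠ 0 := by
      have := hp.two_le
      exact_mod_cast (by omega : p ≠ 0)
    have h5 := (pow_dvd_pow_iff hpz h4).1 h3
    omega
  have hpcd : p ^ c ∣ d := Nat.ordProj_dvd d p
  have hpcd1 : ¬ p ^ (c + 1) ∣ d := Nat.pow_succ_factorization_not_dvd hd0 hp
  have key : (¬ p ∣ Nc Fq d) ↔ (a : ℕ) * e0 = c := by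
    constructor
    · intro hN
      have h1 : (a : ℕ) * e0 ≤ c := by
        have hnat : p ^ ((a : ℕ) * e0) ∣ d * Nc Fq d := by exact_mod_cast hdvdS
        have hcop : Nat.Coprime (p ^ ((a : ℕ) * e0)) (Nc Fq d) :=
          Nat.Coprime.pow_left _ ((Nat.Prime.coprime_iff_not_dvd hp).2 hN)
        have hdd : p ^ ((a : ℕ) * e0) ∣ d := hcop.dvd_of_dvd_mul_right hnat
        exact (Nat.Prime.pow_dvd_iff_le_factorization hp hd0).1 hdd
      have h2 : c ≤ (a : ℕ) * e0 := by
        by_contra hlt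
        push_neg at hlt
        apply hndvdS
        have hnat : p ^ ((a : ℕ) * e0 + 1) ∣ d * Nc Fq d :=
          dvd_mul_of_dvd_left (dvd_trans (pow_dvd_pow p (by omega)) hpcd) _
        exact_mod_cast hnat
      omega
    · intro heq hN
      apply hndvdS
      have hnat : p ^ (c + 1) ∣ d * Nc Fq d := by
        rw [pow_succ]
        exact mul_dvd_mul hpcd hN
      rw [heq]
      exact_mod_cast hnat
  have key2 : ((a : ℕ) * e0 = c) ↔
      ((Nat.Prime q ∧ q ∣ d ∧ Squarefree d) ∨
        (q = 2 ∧ ∃ m : ℕ, Odd m ∧ Squarefree m ∧ d = 4 * m)) := by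
    constructor
    · intro heq
      have hc1 : 1 ≤ c := by
        have h := Nat.mul_le_mul ha1 he01
        omega
      have hpd : p ∣ d := (Nat.Prime.dvd_iff_one_le_factorization hp hd0).2 hc1
      have hfe0p : e0.factorization p = c - 1 := by
        have h := hfac p hp
        rw [if_pos hpd] at h
        omega
      rcases lt_or_ge c 3 with hc3 | hc3
      · have hc12 : c = 1 ∨ c = 2 := by omega
        rcases hc12 with hc | hc
        · -- c = 1
          have ha' : (a : ℕ) = 1 := by
            have hd1 : (a : ℕ) ∣ 1 := Dvd.intro e0 (by rw [← hc, ← heq])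
            have := Nat.le_of_dvd one_pos hd1
            omega
          have he' : e0 = 1 := by
            rw [hc, ha', one_mul] at heq
            exact heq
          left
          have hqp : q = p := by rw [hqa, ha', pow_one]
          refine ⟨hqp ▸ hp, hqp ▸ hpd, ?_⟩
          rw [Nat.squarefree_iff_factorization_le_one hd0]
          intro ℓ
          by_cases hℓ : ℓ.Prime
          · have h := hfac ℓ hℓ
            have h0 : e0.factorization ℓ = 0 := by rw [he']; simp
            split_ifs at h with h' <;> omega
          · simp [Nat.factorization_eq_zero_of_not_prime d hℓ]
        · -- c = 2
          have hne1 : e0 ≠ 1 := by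
            intro h
            rw [h, Nat.factorization_one] at hfe0p
            simp [hc] at hfe0p
          have he0le : e0 ≤ 2 := by
            have h := Nat.le_mul_of_pos_left e0 (show 0 < (a : ℕ) by omega)
            omega
          have he' : e0 = 2 := by omega
          have ha' : (a : ℕ) = 1 := by
            rw [he', hc] at heq
            omega
          have hpe0 : p ∣ e0 := by
            refine (Nat.Prime.dvd_iff_one_le_factorization hp he00).2 ?_
            omega
          have hp2 : p = 2 := by
            rw [he'] at hpe0
            exact (Nat.prime_dvd_prime_iff_eq hp Nat.prime_two).1 hpe0
          right
          have hq2 : q = 2 := by rw [hqa, ha', pow_one, hp2]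
          refine ⟨hq2, ?_⟩
          obtain ⟨m, hm⟩ : 4 ∣ d := by
            have h4 : p ^ 2 ∣ d := by rw [← hc]; exact hpcd
            rw [hp2] at h4
            simpa using h4
          have hm0 : m ≠ 0 := by
            rintro rfl
            rw [mul_zero] at hm
            exact hd0 hm
          have hmodd : ¬ 2 ∣ m := by
            intro h2m
            obtain ⟨t, rfl⟩ := h2m
            have h8 : 2 ^ 3 ∣ d := ⟨t, by rw [hm]; ring⟩
            have h9 := (Nat.Prime.pow_dvd_iff_le_factorization Nat.prime_two hd0).1 h8
            rw [← hp2, ← hcdef] at h9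
            omega
          refine ⟨m, Nat.odd_iff.2 (by omega), ?_, hm⟩
          rw [Nat.squarefree_iff_factorization_le_one hm0]
          intro ℓ
          by_cases hℓ : ℓ.Prime
          · have hmd : m ∣ d := ⟨4, by rw [hm]; ring⟩
            have hle : m.factorization ℓ ≤ d.factorization ℓ :=
              ((Nat.factorization_le_iff_dvd hm0 hd0).2 hmd) ℓ
            by_cases hl2 : ℓ = 2
            · rw [hl2, Nat.factorization_eq_zero_of_not_dvd hmodd]
              omega
            · have h := hfac ℓ hℓ
              have h0 : e0.factorization ℓ = 0 := by
                rw [he', show (2 : ℕ) = 2 ^ 1 by norm_num,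
                  Nat.Prime.factorization_pow Nat.prime_two]
                simp [Finsupp.single_apply, Ne.symm hl2]
              split_ifs at h with h' <;> omega
          · simp [Nat.factorization_eq_zero_of_not_prime m hℓ]
      · exfalso
        have h1 : p ^ (c - 1) ∣ e0 := by
          rw [← hfe0p]
          exact Nat.ordProj_dvd e0 p
        have h2 : p ^ (c - 1) ≤ e0 := Nat.le_of_dvd (by omega) h1
        have h3 : 2 ^ (c - 1) ≤ p ^ (c - 1) := Nat.pow_le_pow_left hp.two_le _
        have h4 := two_pow_gt hc3
        have h5 : e0 ≤ (a : ℕ) * e0 := Nat.le_mul_of_pos_left e0 (by omega)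
        omega
    · rintro (⟨hqp, hqd, hsqf⟩ | ⟨hq2, m, hmodd, hmsq, hdm⟩)
      · have hpq : p = q := by
          have hpq' : p ∣ q := by rw [hqa]; exact dvd_pow_self p a.ne_zero
          exact (Nat.prime_dvd_prime_iff_eq hp hqp).1 hpq'
        have ha' : (a : ℕ) = 1 := by
          have h : p ^ (a : ℕ) = p ^ 1 := by rw [← hqa, pow_one, hpq]
          exact Nat.pow_right_injective hp.two_le h
        have hpd : p ∣ d := hpq ▸ hqd
        have hc : c = 1 := by
          have hle := (Nat.squarefree_iff_factorization_le_one hd0).1 hsqf p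
          have hge := Nat.Prime.factorization_pos_of_dvd hp hd0 hpd
          omega
        have hR_eq : R = d := Nat.prod_primeFactors_of_squarefree hsqf
        have he0_eq : e0 = 1 := by rw [he0def, hR_eq, Nat.div_self (by omega)]
        rw [ha', he0_eq, hc]
      · have hpq' : p ∣ q := by rw [hqa]; exact dvd_pow_self p a.ne_zero
        have hp2 : p = 2 := by
          rw [hq2] at hpq'
          exact (Nat.prime_dvd_prime_iff_eq hp Nat.prime_two).1 hpq'
        have ha' : (a : ℕ) = 1 := by
          have h : p ^ (a : ℕ) = p ^ 1 := by rw [← hqa, pow_one, hq2, hp2]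
          exact Nat.pow_right_injective hp.two_le h
        have hm0 : m ≠ 0 := by
          rintro rfl
          rw [mul_zero] at hdm
          exact hd0 hdm
        have hm2 : ¬ 2 ∣ m := by
          rw [Nat.odd_iff] at hmodd
          omega
        have hfac4 : d.factorization 2 = 2 := by
          rw [hdm, Nat.factorization_mul (by norm_num) hm0]
          have h4 : (4 : ℕ).factorization 2 = 2 := by
            rw [show (4 : ℕ) = 2 ^ 2 by norm_num, Nat.Prime.factorization_pow Nat.prime_two]
            simp
          simp only [Finsupp.add_apply, h4, Nat.factorization_eq_zero_of_not_dvd hm2]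
        have hc : c = 2 := by rw [hcdef, hp2, hfac4]
        have h2nm : 2 ∉ m.primeFactors := by
          intro h
          exact hm2 (Nat.dvd_of_mem_primeFactors h)
        have hpf : d.primeFactors = insert 2 m.primeFactors := by
          rw [hdm, Nat.primeFactors_mul (by norm_num) hm0,
            show (4 : ℕ) = 2 ^ 2 by norm_num, Nat.primeFactors_pow 2 (by norm_num),
            Nat.Prime.primeFactors Nat.prime_two, Finset.insert_eq]
        have hR_eq : R = 2 * m := by
          rw [hR, hpf, Finset.prod_insert h2nm, Nat.prod_primeFactors_of_squarefree hmsq]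
        have he0_eq : e0 = 2 := by
          rw [he0def, hR_eq, hdm, show 4 * m = 2 * (2 * m) by ring,
            Nat.mul_div_left 2 (by omega : 0 < 2 * m)]
        rw [ha', he0_eq, hc]
  rw [key, key2]


lemma part1 (d k : ℕ) (hd : 1 ≤ d) (hk : 0 < k) :
    (Pd Fq d k ≠ 0 ∧ -(Pd Fq d k).intDegree = ((k * d : ℕ) : ℤ)) ↔ ((Nc Fq d : Fq) ≠ 0) := by
  classical
  have hkd : 1 ≤ k * d := Nat.one_le_iff_ne_zero.2 (by positivity)
  set u : Polynomial Fq → Polynomial Fq := fun P => 1 - P ^ k with hu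
  -- basic facts about u P for P ∈ T
  have hudeg : ∀ P ∈ T Fq d, (u P).natDegree = k * d := by
    intro P hP
    obtain ⟨hmon, -, hdeg⟩ := (mem_T Fq).1 hP
    have : u P = -(P ^ k - C 1) := by simp only [hu, map_one]; ring
    rw [this, natDegree_neg, natDegree_sub_C, natDegree_pow, hdeg]
  have hulc : ∀ P ∈ T Fq d, (u P).leadingCoeff = -1 := by
    intro P hP
    obtain ⟨hmon, -, hdeg⟩ := (mem_T Fq).1 hP
    have hmonk : (P ^ k).Monic := hmon.pow k
    have hdegk : (P ^ k).natDegree = k * d := by rw [natDegree_pow, hdeg]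
    rw [leadingCoeff, hudeg P hP, hu]
    simp only [coeff_sub]
    rw [coeff_one, if_neg (by omega), ← hdegk, ← leadingCoeff, hmonk.leadingCoeff]
    ring
  have hu0 : ∀ P ∈ T Fq d, u P ≠ 0 := by
    intro P hP h
    have := hulc P hP
    rw [h] at this
    simp at this
  set B : Polynomial Fq := ∏ P ∈ T Fq d, u P with hB
  set A : Polynomial Fq := ∑ P ∈ T Fq d, ∏ Q ∈ (T Fq d).erase P, u Q with hA
  have hB0 : B ≠ 0 := Finset.prod_ne_zero_iff.2 hu0
  have hBdeg : B.natDegree = Nc Fq d * (k * d) := by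
    rw [hB, natDegree_prod _ _ hu0, Finset.sum_congr rfl hudeg, Finset.sum_const, smul_eq_mul, Nc]
  -- each summand of A
  have hprod0 : ∀ P ∈ T Fq d, (∏ Q ∈ (T Fq d).erase P, u Q) ≠ 0 := by
    intro P hP
    exact Finset.prod_ne_zero_iff.2 fun Q hQ => hu0 Q (Finset.mem_of_mem_erase hQ)
  have hproddeg : ∀ P ∈ T Fq d,
      (∏ Q ∈ (T Fq d).erase P, u Q).natDegree = (Nc Fq d - 1) * (k * d) := by
    intro P hP
    rw [natDegree_prod _ _ fun Q hQ => hu0 Q (Finset.mem_of_mem_erase hQ),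
      Finset.sum_congr rfl fun Q hQ => hudeg Q (Finset.mem_of_mem_erase hQ),
      Finset.sum_const, smul_eq_mul, Finset.card_erase_of_mem hP, Nc]
  have hprodlc : ∀ P ∈ T Fq d,
      (∏ Q ∈ (T Fq d).erase P, u Q).leadingCoeff = (-1 : Fq) ^ (Nc Fq d - 1) := by
    intro P hP
    rw [leadingCoeff_prod, Finset.prod_congr rfl fun Q hQ => hulc Q (Finset.mem_of_mem_erase hQ),
      Finset.prod_const, Finset.card_erase_of_mem hP, Nc]
  have hAdegle : A.natDegree ≤ (Nc Fq d - 1) * (k * d) := by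
    rw [hA]
    exact natDegree_sum_le_of_forall_le _ _ fun P hP => le_of_eq (hproddeg P hP)
  have hAco : A.coeff ((Nc Fq d - 1) * (k * d)) = (Nc Fq d : Fq) * (-1 : Fq) ^ (Nc Fq d - 1) := by
    rw [hA, finset_sum_coeff]
    have hco : ∀ P ∈ T Fq d,
        (∏ Q ∈ (T Fq d).erase P, u Q).coeff ((Nc Fq d - 1) * (k * d))
          = (-1 : Fq) ^ (Nc Fq d - 1) := by
      intro P hP
      rw [← hproddeg P hP, coeff_natDegree, hprodlc P hP]
    rw [Finset.sum_congr rfl hco, Finset.sum_const, nsmul_eq_mul, Nc]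
  -- Pd as a ratio
  have hPdsum : Pd Fq d k = ∑ P ∈ T Fq d,
      (1 - algebraMap (Polynomial Fq) (RatFunc Fq) P ^ k)⁻¹ := by
    rw [Pd, show {P : Polynomial Fq | P.Monic ∧ Irreducible P ∧ P.natDegree = d}
        = ↑(T Fq d) from ((finite_S Fq d).coe_toFinset).symm, finsum_mem_coe_finset]
  have halg : ∀ P : Polynomial Fq,
      algebraMap (Polynomial Fq) (RatFunc Fq) (u P)
        = 1 - algebraMap (Polynomial Fq) (RatFunc Fq) P ^ k := by
    intro P
    rw [hu]
    simp [map_sub, map_pow]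
  have halg0 : ∀ P ∈ T Fq d, algebraMap (Polynomial Fq) (RatFunc Fq) (u P) ≠ 0 :=
    fun P hP => RatFunc.algebraMap_ne_zero (hu0 P hP)
  have hmulB : Pd Fq d k * algebraMap (Polynomial Fq) (RatFunc Fq) B
      = algebraMap (Polynomial Fq) (RatFunc Fq) A := by
    rw [hPdsum, Finset.sum_mul, hA, map_sum]
    refine Finset.sum_congr rfl fun P hP => ?_
    rw [hB, map_prod, ← halg P, ← Finset.mul_prod_erase _ _ hP,
      inv_mul_cancel_left₀ (halg0 P hP), map_prod]
  have hBalg : algebraMap (Polynomial Fq) (RatFunc Fq) B ≠ 0 := RatFunc.algebraMap_ne_zero hB0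
  by_cases hN : (Nc Fq d : Fq) = 0
  · constructor
    · rintro ⟨hne, hdeg⟩
      exfalso
      have hA0 : A ≠ 0 := by
        intro h
        apply hne
        rw [h, _root_.map_zero] at hmulB
        exact (mul_eq_zero.1 hmulB).resolve_right hBalg
      have hT0 : (T Fq d).Nonempty := by
        by_contra h
        rw [Finset.not_nonempty_iff_eq_empty] at h
        exact hA0 (by rw [hA, h, Finset.sum_empty])
      have hN1 : 1 ≤ Nc Fq d := Finset.card_pos.2 hT0
      have hAne : A.natDegree ≠ (Nc Fq d - 1) * (k * d) := by
        intro h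
        have hlc := hAco
        rw [← h, coeff_natDegree] at hlc
        rw [hN, zero_mul] at hlc
        exact hA0 (leadingCoeff_eq_zero.1 hlc)
      have hAlt : A.natDegree < (Nc Fq d - 1) * (k * d) := lt_of_le_of_ne hAdegle hAne
      have hID := RatFunc.intDegree_mul hne hBalg
      rw [hmulB, RatFunc.intDegree_polynomial, RatFunc.intDegree_polynomial] at hID
      -- cast bookkeeping
      have hc1 : (Nc Fq d - 1) * (k * d) = Nc Fq d * (k * d) - k * d := by
        rw [Nat.sub_mul, one_mul]
      have hc2 : k * d ≤ Nc Fq d * (k * d) := Nat.le_mul_of_pos_left _ (by omega)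
      rw [hBdeg] at hID
      rw [hc1] at hAlt
      omega
    · intro h
      exact absurd hN h
  · have hN1 : 1 ≤ Nc Fq d := by
      rcases Nat.eq_zero_or_pos (Nc Fq d) with h | h
      · rw [h] at hN
        simp at hN
      · exact h
    have hA0 : A ≠ 0 := by
      intro h
      rw [h, coeff_zero] at hAco
      exact hN (by
        have := hAco.symm
        rcases mul_eq_zero.1 this with h' | h'
        · exact h'
        · exact absurd h' (pow_ne_zero _ (by norm_num)))
    have hAdeg : A.natDegree = (Nc Fq d - 1) * (k * d) := by
      refine le_antisymm hAdegle (le_natDegree_of_ne_zero ?_)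
      rw [hAco]
      exact mul_ne_zero hN (pow_ne_zero _ (by norm_num))
    have hne : Pd Fq d k ≠ 0 := by
      intro h
      rw [h, zero_mul] at hmulB
      exact RatFunc.algebraMap_ne_zero hA0 hmulB.symm
    have hID := RatFunc.intDegree_mul hne hBalg
    rw [hmulB, RatFunc.intDegree_polynomial, RatFunc.intDegree_polynomial] at hID
    rw [hBdeg, hAdeg] at hID
    have hc1 : (Nc Fq d - 1) * (k * d) = Nc Fq d * (k * d) - k * d := by
      rw [Nat.sub_mul, one_mul]
    have hc2 : k * d ≤ Nc Fq d * (k * d) := Nat.le_mul_of_pos_left _ (by omega)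
    constructor
    · intro _
      exact hN
    · intro _
      refine ⟨hne, ?_⟩
      rw [hc1] at hID
      omega


end Stmt10

/-- For `d ≥ 1` and `k` a positive multiple of `q - 1`: `P_d(k) ≠ 0` with valuation at
infinity exactly `kd` iff (I) `q` is prime, `q ∣ d` and `d` is squarefree, or (II) `q = 2`
and `d = 4m` with `m` odd and squarefree. -/
theorem stmt_10 (Fq : Type*) [Field Fq] [Fintype Fq] (d k : ℕ) (hd : 1 ≤ d) (hk : 0 < k)
    (hdvd : Fintype.card Fq - 1 ∣ k) :
    (Pd Fq d k ≠ 0 ∧ -(Pd Fq d k).intDegree = ((k * d : ℕ) : ℤ)) ↔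
      ((Nat.Prime (Fintype.card Fq) ∧ Fintype.card Fq ∣ d ∧ Squarefree d) ∨
        (Fintype.card Fq = 2 ∧ ∃ m : ℕ, Odd m ∧ Squarefree m ∧ d = 4 * m)) := by
  obtain ⟨p, hpc⟩ := CharP.exists Fq
  haveI := hpc
  rw [Stmt10.part1 Fq d k hd hk,
    show ((Stmt10.Nc Fq d : Fq) ≠ 0) ↔ ¬ p ∣ Stmt10.Nc Fq d from
      not_congr (CharP.cast_eq_zero_iff Fq p _)]
  exact Stmt10.part2 Fq p d hd
end

section
/- Let q = 2, let k be an odd positive integer, and let d ≥ 1. Then: (a) if d is odd and squarefree, P_d(k) ≠ 0 and its valuation at infinity p_d(k) equals dk + 1; (b) if d is even and squarefree, or d = 4m with m odd and squarefree, then P_d(k) ≠ 0 and p_d(k) = dk; (c) in all remaining cases, either P_d(k) = 0 or p_d(k) > dk + 1. -/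
open Polynomial UniqueFactorizationMonoid ArithmeticFunction

local notation "F2" => ZMod 2


lemma natDegree_le_finite (n : ℕ) : {P : Polynomial F2 | P.natDegree ≤ n}.Finite := by
  have hsub : {P : Polynomial F2 | P.natDegree ≤ n} ⊆
      (fun c : Fin (n+1) → F2 => ∑ i : Fin (n+1), Polynomial.C (c i) * X ^ (i : ℕ)) ''
        Set.univ := by
    intro P hP
    refine ⟨fun i => P.coeff i, Set.mem_univ _, ?_⟩
    have h := (Polynomial.as_sum_range' P (n+1) (Nat.lt_succ_of_le hP)).symm
    simp only [Fin.sum_univ_eq_sum_range (fun i => Polynomial.C (P.coeff i) * X ^ i)]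
    simpa [Polynomial.C_mul_X_pow_eq_monomial] using h
  exact Set.Finite.subset (Set.toFinite _) hsub

lemma irrSet_finite (e : ℕ) :
    {P : Polynomial F2 | P.Monic ∧ Irreducible P ∧ P.natDegree = e}.Finite :=
  (natDegree_le_finite e).subset (fun P hP => le_of_eq hP.2.2)

noncomputable def irrF (e : ℕ) : Finset (Polynomial F2) := (irrSet_finite e).toFinset

lemma mem_irrF {e : ℕ} {P : Polynomial F2} :
    P ∈ irrF e ↔ P.Monic ∧ Irreducible P ∧ P.natDegree = e := by
  simp [irrF, Set.Finite.mem_toFinset]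

lemma pow_sub_one_dvd_nat {e d : ℕ} (he : 0 < e) (h : 2^e - 1 ∣ 2^d - 1) : e ∣ d := by
  have hmod : d % e < e := Nat.mod_lt _ he
  have hsplit : 2^d = 2^(e * (d / e)) * 2^(d % e) := by
    rw [← pow_add]
    congr 1
    exact (Nat.div_add_mod d e).symm
  have h1 : 2^e - 1 ∣ 2^(e * (d/e)) - 1 := Nat.pow_sub_one_dvd_pow_sub_one 2 (dvd_mul_right e (d/e))
  set A := 2^(e * (d/e)) with hA
  set B := 2^(d % e) with hB
  have hA1 : 1 ≤ A := Nat.one_le_two_pow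
  have hB1 : 1 ≤ B := Nat.one_le_two_pow
  have key : 2^d - 1 = (A - 1) * B + (B - 1) := by
    rw [hsplit, Nat.sub_one_mul]
    have : B ≤ A * B := Nat.le_mul_of_pos_left B hA1
    omega
  have h2 : 2^e - 1 ∣ (A - 1) * B := h1.mul_right B
  have h3 : 2^e - 1 ∣ B - 1 := by
    have := Nat.dvd_sub (key ▸ h) h2
    simpa using this
  have hBlt : B - 1 < 2^e - 1 := by
    have : B < 2^e := by
      rw [hB]; exact Nat.pow_lt_pow_right one_lt_two hmod
    omega
  have hB0 : B - 1 = 0 := Nat.eq_zero_of_dvd_of_lt h3 hBlt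
  have : d % e = 0 := by
    have hB1' : B = 1 := by omega
    rw [hB] at hB1'
    by_contra hne
    have : 2 ≤ 2^(d % e) := Nat.one_lt_two_pow_iff.mpr hne
    omega
  exact Nat.dvd_of_mod_eq_zero this

lemma irr_dvd_iff {d : ℕ} (hd : 0 < d) {℘ : Polynomial F2} (hi : Irreducible ℘) :
    ℘ ∣ (X ^ 2^d - X) ↔ ℘.natDegree ∣ d := by
  haveI : Fact (Irreducible ℘) := ⟨hi⟩
  set e := ℘.natDegree with he
  have he1 : 0 < e := hi.natDegree_pos
  letI F := AdjoinRoot ℘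
  haveI : Fintype F := Module.fintypeOfFintype (AdjoinRoot.powerBasis hi.ne_zero).basis
  have hcardF : Fintype.card F = 2 ^ e := by
    rw [Module.card_fintype (AdjoinRoot.powerBasis hi.ne_zero).basis, ZMod.card,
      Fintype.card_fin, AdjoinRoot.powerBasis_dim]
  set r : F := AdjoinRoot.root ℘ with hr
  have hdvd_iff : ℘ ∣ (X ^ 2^d - X) ↔ r ^ 2^d = r := by
    rw [← AdjoinRoot.mk_eq_zero, map_sub, map_pow, AdjoinRoot.mk_X, sub_eq_zero]
  rw [hdvd_iff]
  clear hdvd_iff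
  constructor
  · intro hfix
    haveI : CharP F 2 := charP_of_injective_algebraMap (algebraMap F2 F).injective 2
    set ψ : F →+* F := iterateFrobenius F 2 d with hψ
    have hψdef : ∀ y : F, ψ y = y ^ 2^d := fun y => iterateFrobenius_def 2 d y
    have hψr : ψ r = r := by rw [hψdef]; exact hfix
    have hall : ∀ y : F, y ^ 2^d = y := by
      intro y
      obtain ⟨p, rfl⟩ := AdjoinRoot.mk_surjective (g := ℘) y
      rw [← AdjoinRoot.aeval_eq, ← hψdef]
      rw [Polynomial.aeval_def, Polynomial.hom_eval₂]
      rw [RingHom.ext_zmod (ψ.comp (algebraMap F2 F)) (algebraMap F2 F), hψr]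
    obtain ⟨g, hg⟩ := IsCyclic.exists_generator (α := Fˣ)
    have horder : orderOf g = 2 ^ e - 1 := by
      rw [orderOf_eq_card_of_forall_mem_zpowers hg, Nat.card_eq_fintype_card,
        Fintype.card_units, hcardF]
    have hgpow : g ^ (2^d - 1) = 1 := by
      have h1 : (g : F) ^ 2^d = (g : F) := hall g
      have h2 : g ^ 2^d = g := by
        apply Units.ext; simpa using h1
      have h3 : g ^ (2^d - 1) * g = g := by
        rw [← pow_succ]
        have h4 : 2^d - 1 + 1 = 2^d := by
          have : 1 ≤ 2^d := Nat.one_le_two_pow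
          omega
        rw [h4, h2]
      calc g ^ (2^d - 1) = g ^ (2^d - 1) * g * g⁻¹ := by group
        _ = g * g⁻¹ := by rw [h3]
        _ = 1 := mul_inv_cancel g
    have hdvd : 2^e - 1 ∣ 2^d - 1 := horder ▸ orderOf_dvd_of_pow_eq_one hgpow
    exact pow_sub_one_dvd_nat he1 hdvd
  · rintro ⟨s, rfl⟩
    have base : r ^ 2^e = r := by
      have := FiniteField.pow_card r
      rwa [hcardF] at this
    clear hd
    induction s with
    | zero => simp
    | succ n ih =>
      rw [mul_add, mul_one, pow_add, pow_mul, ih, base]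

noncomputable def Idvd (d : ℕ) : Finset (Polynomial F2) :=
  (Nat.divisors d).biUnion (fun e => irrF e)

lemma mem_Idvd {d : ℕ} (hd : 0 < d) {P : Polynomial F2} :
    P ∈ Idvd d ↔ P.Monic ∧ Irreducible P ∧ P.natDegree ∣ d := by
  unfold Idvd
  rw [Finset.mem_biUnion]
  constructor
  · rintro ⟨e, hed, hP⟩
    obtain ⟨h1, h2, h3⟩ := mem_irrF.mp hP
    exact ⟨h1, h2, h3 ▸ (Nat.mem_divisors.mp hed).1⟩
  · rintro ⟨h1, h2, h3⟩
    exact ⟨P.natDegree, Nat.mem_divisors.mpr ⟨h3, hd.ne'⟩, mem_irrF.mpr ⟨h1, h2, rfl⟩⟩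

lemma monic_f {d : ℕ} (hd : 0 < d) : (X ^ 2^d - X : Polynomial F2).Monic := by
  have h2 : 2 ≤ 2^d := Nat.one_lt_two_pow_iff.mpr hd.ne'
  apply Polynomial.monic_X_pow_sub
  rw [Polynomial.degree_X]
  exact_mod_cast h2

lemma sep_f {d : ℕ} (hd : 0 < d) : (X ^ 2^d - X : Polynomial F2).Separable := by
  unfold Polynomial.Separable
  have hder : derivative (X ^ 2^d - X : Polynomial F2) = -1 := by
    rw [derivative_sub, derivative_X_pow, derivative_X]
    have : ((2^d : ℕ) : F2) = 0 := by
      rw [ZMod.natCast_eq_zero_iff]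
      exact dvd_pow_self 2 hd.ne'
    rw [this]
    simp
  rw [hder]
  exact ⟨0, -1, by ring⟩

lemma factorization_f {d : ℕ} (hd : 0 < d) :
    (X ^ 2^d - X : Polynomial F2) = ∏ ℘ ∈ Idvd d, ℘ := by
  classical
  set f : Polynomial F2 := X ^ 2^d - X with hf
  have hfm : f.Monic := monic_f hd
  have hf0 : f ≠ 0 := hfm.ne_zero
  have hsq : Squarefree f := (sep_f hd).squarefree
  set nf := normalizedFactors f with hnf
  have hnodup : nf.Nodup := (squarefree_iff_nodup_normalizedFactors hf0).mp hsq
  have hmono : ∀ q ∈ nf, q.Monic := by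
    intro q hq
    have h1 := normalize_normalized_factor q hq
    have h2 : q ≠ 0 := (irreducible_of_normalized_factor q hq).ne_zero
    have := Polynomial.monic_normalize h2
    rwa [h1] at this
  have hprodmonic : nf.prod.Monic := by
    have := Polynomial.monic_multiset_prod_of_monic nf _root_.id (fun q hq => hmono q hq)
    simpa using this
  have hprod : nf.prod = f := eq_of_monic_of_associated hprodmonic hfm (prod_normalizedFactors hf0)
  have hfin : nf.toFinset = Idvd d := by
    ext ℘
    rw [Multiset.mem_toFinset, mem_Idvd hd]
    constructor
    · intro h
      have hi := irreducible_of_normalized_factor ℘ h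
      exact ⟨hmono ℘ h, hi, (irr_dvd_iff hd hi).mp (dvd_of_mem_normalizedFactors h)⟩
    · rintro ⟨hm, hi, hdd⟩
      obtain ⟨q, hq, hassoc⟩ :=
        exists_mem_normalizedFactors_of_dvd hf0 hi ((irr_dvd_iff hd hi).mpr hdd)
      rwa [eq_of_monic_of_associated hm (hmono q hq) hassoc]
  calc f = nf.prod := hprod.symm
    _ = (nf.toFinset.val.map _root_.id).prod := by
        rw [Multiset.toFinset_val, Multiset.dedup_eq_self.mpr hnodup, Multiset.map_id]
    _ = ∏ ℘ ∈ nf.toFinset, ℘ := rfl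
    _ = ∏ ℘ ∈ Idvd d, ℘ := by rw [hfin]

noncomputable def Nd (e : ℕ) : ℕ := (irrF e).card
noncomputable def TT (e : ℕ) : F2 := ∑ ℘ ∈ irrF e, ℘.nextCoeff

lemma irrF_disj {d : ℕ} : Set.PairwiseDisjoint ↑(Nat.divisors d) (fun e => irrF e) := by
  intro e₁ _ e₂ _ hne
  simp only [Function.onFun]
  rw [Finset.disjoint_left]
  intro P h1 h2
  exact hne ((mem_irrF.mp h1).2.2 ▸ (mem_irrF.mp h2).2.2 ▸ rfl)

lemma natDegree_f {d : ℕ} (hd : 0 < d) : (X ^ 2^d - X : Polynomial F2).natDegree = 2^d := by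
  have h2 : 2 ≤ 2^d := Nat.one_lt_two_pow_iff.mpr hd.ne'
  rw [natDegree_sub_eq_left_of_natDegree_lt]
  · exact natDegree_X_pow _
  · rw [natDegree_X, natDegree_X_pow]; omega

lemma sum_deg {d : ℕ} (hd : 0 < d) : ∑ e ∈ Nat.divisors d, e * Nd e = 2^d := by
  have h := congrArg Polynomial.natDegree (factorization_f hd)
  unfold Idvd at h
  rw [natDegree_f hd, Polynomial.natDegree_prod _ _
      (fun P hP => ((Finset.mem_biUnion.mp hP).elim
        (fun e he => (mem_irrF.mp he.2).2.1.ne_zero))),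
    Finset.sum_biUnion irrF_disj] at h
  rw [h]
  apply Finset.sum_congr rfl
  intro e he
  rw [Finset.sum_congr rfl (fun P hP => (mem_irrF.mp hP).2.2), Finset.sum_const, smul_eq_mul,
    Nd, mul_comm]

lemma nextCoeff_f {d : ℕ} (hd : 0 < d) :
    (X ^ 2^d - X : Polynomial F2).nextCoeff = if d = 1 then 1 else 0 := by
  have h2 : 2 ≤ 2^d := Nat.one_lt_two_pow_iff.mpr hd.ne'
  rw [nextCoeff_of_natDegree_pos (by rw [natDegree_f hd]; omega), natDegree_f hd]
  rw [coeff_sub, coeff_X_pow, coeff_X]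
  have hne : ¬ (2^d - 1 = 2^d) := by omega
  have hiff : 2^d - 1 = 1 ↔ d = 1 := by
    constructor
    · intro h
      by_contra hne1
      have : 2 ≤ d := by omega
      have : 4 ≤ 2^d := by calc 4 = 2^2 := rfl
                                _ ≤ 2^d := Nat.pow_le_pow_right (by norm_num) this
      omega
    · intro h; subst h; rfl
  by_cases hd1 : d = 1
  · subst hd1
    decide
  · rw [if_neg hne, if_neg (fun h => hd1 (hiff.mp h.symm)), if_neg hd1]
    simp

lemma sum_TT {d : ℕ} (hd : 0 < d) :
    ∑ e ∈ Nat.divisors d, TT e = if d = 1 then 1 else 0 := by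
  have h := congrArg Polynomial.nextCoeff (factorization_f hd)
  unfold Idvd at h
  rw [nextCoeff_f hd, Polynomial.Monic.nextCoeff_prod _ _
      (fun P hP => ((Finset.mem_biUnion.mp hP).elim (fun e he => (mem_irrF.mp he.2).1))),
    Finset.sum_biUnion irrF_disj] at h
  rw [h]
  rfl

lemma Nd_moebius {n : ℕ} (hn : 0 < n) :
    ∑ x ∈ n.divisorsAntidiagonal,
      (ArithmeticFunction.moebius x.1) • ((2:ℤ)^x.2) = (n : ℤ) * Nd n := by
  have := (ArithmeticFunction.sum_eq_iff_sum_smul_moebius_eq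
    (f := fun e => (e : ℤ) * Nd e) (g := fun n => (2:ℤ)^n)).mp ?_ n hn
  · exact this
  · intro n hn
    have := sum_deg hn
    push_cast [← this]
    norm_cast

lemma TT_eq {d : ℕ} (hd : 0 < d) : TT d = if Squarefree d then 1 else 0 := by
  have key := (ArithmeticFunction.sum_eq_iff_sum_smul_moebius_eq
    (f := fun e => TT e) (g := fun n => if n = 1 then (1:F2) else 0)).mp
    (fun n hn => sum_TT hn) d hd
  rw [← key]
  rw [Finset.sum_eq_single_of_mem (d, 1)
      (Nat.mem_divisorsAntidiagonal.mpr ⟨by simp, hd.ne'⟩)]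
  · rw [if_pos rfl, zsmul_one]
    by_cases hsf : Squarefree d
    · rw [if_pos hsf]
      rw [ArithmeticFunction.moebius_apply_of_squarefree hsf]
      push_cast
      rw [show ((-1 : F2)) = 1 by decide, one_pow]
    · rw [if_neg hsf, ArithmeticFunction.moebius_eq_zero_of_not_squarefree hsf, Int.cast_zero]
  · rintro ⟨x, y⟩ hmem hne
    have h := Nat.mem_divisorsAntidiagonal.mp hmem
    have hy : y ≠ 1 := by
      rintro rfl
      exact hne (by rw [← h.1]; simp)
    rw [if_neg hy, smul_zero]

lemma lt_two_pow_pred {a : ℕ} (ha : 3 ≤ a) : a < 2^(a-1) := by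
  induction a with
  | zero => omega
  | succ n ih =>
    rcases Nat.lt_or_ge n 3 with h | h
    · interval_cases n <;> simp_all
    · have := ih (by omega)
      have h2 : 2^(n-1) ≥ 1 := Nat.one_le_two_pow
      have : 2^(n+1-1) = 2 * 2^(n-1) := by
        rw [show n+1-1 = (n-1)+1 by omega, pow_succ]; ring
      omega

lemma Nd_odd_iff {d : ℕ} (hd : 0 < d) :
    Odd (Nd d) ↔
      ((Even d ∧ Squarefree d) ∨ ∃ m, Odd m ∧ Squarefree m ∧ d = 4 * m) := by
  classical
  set a := d.factorization 2 with ha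
  set m := d / 2^a with hm
  have hd0 : d ≠ 0 := hd.ne'
  have hdm : 2^a * m = d := Nat.ordProj_mul_ordCompl_eq_self d 2
  have hmodd : ¬ 2 ∣ m := Nat.not_dvd_ordCompl Nat.prime_two hd0
  have hm0 : m ≠ 0 := by intro h0; rw [h0, mul_zero] at hdm; omega
  have hS := Nd_moebius hd
  -- helper: factorization of 4 * m' for odd m'
  have hfact4 : ∀ m' : ℕ, Odd m' → d = 4 * m' → a = 2 := by
    rintro m' hodd rfl
    have hm'0 : m' ≠ 0 := by rintro rfl; omega
    have h2m' : ¬ 2 ∣ m' := by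
      rw [Nat.odd_iff] at hodd; omega
    rw [ha]
    simp only [Nat.factorization_mul (by norm_num : (4:ℕ) ≠ 0) hm'0, Finsupp.add_apply]
    rw [Nat.factorization_eq_zero_of_not_dvd h2m']
    rw [show (4:ℕ) = 2^2 by norm_num, Nat.Prime.factorization_pow Nat.prime_two]
    simp
  -- helper: term divisibility
  have hterm : ∀ x y : ℕ, x * y = d → (a < y ∨ ArithmeticFunction.moebius x = 0) →
      (2:ℤ)^(a+1) ∣ (ArithmeticFunction.moebius x) • ((2:ℤ)^y) := by
    rintro x y hxy (hy | hx0)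
    · exact Dvd.dvd.mul_left (pow_dvd_pow 2 hy) _
    · rw [hx0]; simp
  have hcrit : ∀ x y : ℕ, x * y = d → y ≤ a → ArithmeticFunction.moebius x ≠ 0 → 2^(a-1) ∣ y := by
    intro x y hxy hy hx0
    have hsf : Squarefree x := moebius_ne_zero_iff_squarefree.mp hx0
    have hx0' : x ≠ 0 := hsf.ne_zero
    have hy0' : y ≠ 0 := by rintro rfl; omega
    have hfx : x.factorization 2 ≤ 1 := hsf.natFactorization_le_one 2
    have hsum : x.factorization 2 + y.factorization 2 = a := by
      rw [ha, ← hxy]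
      simp only [Nat.factorization_mul hx0' hy0', Finsupp.add_apply]
    have : a - 1 ≤ y.factorization 2 := by omega
    exact dvd_trans (pow_dvd_pow 2 this) (Nat.ordProj_dvd y 2)
  clear_value a m
  clear hm ha
  have hdZ : (d:ℤ) = 2^a * m := by exact_mod_cast congrArg (Nat.cast : ℕ → ℤ) hdm.symm
  have hoddm : Odd m := Nat.odd_iff.mpr (by omega)
  set M := (m:ℤ) * (Nd d : ℤ) with hMdef
  have conclude_even : (2:ℤ) ∣ M → ¬ Odd (Nd d) := by
    intro h2 hodd
    have h1 : Odd M := (Int.odd_mul).mpr ⟨Int.odd_coe_nat m |>.mpr hoddm, Int.odd_coe_nat _ |>.mpr hodd⟩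
    rw [Int.odd_iff] at h1
    omega
  have conclude_odd : ∀ k : ℤ, M = 2 * k + 1 → Odd (Nd d) := by
    intro k hk
    have h1 : Odd M := ⟨k, by omega⟩
    rcases (Int.odd_mul).mp h1 with ⟨_, h2⟩
    exact (Int.odd_coe_nat _).mp h2
  have hpow_dvd : ∀ x y : ℕ, x * y = d → y ≠ 0 := by
    intro x y hxy hy0
    rw [hy0, mul_zero] at hxy
    omega
  by_cases hbig : 3 ≤ a
  · -- a ≥ 3 : Nd even, RHS false
    apply iff_of_false
    · have hall : (2:ℤ)^(a+1) ∣ (d:ℤ) * Nd d := by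
        rw [← hS]
        apply Finset.dvd_sum
        rintro ⟨x, y⟩ hxy
        have hmem := (Nat.mem_divisorsAntidiagonal.mp hxy).1
        apply hterm x y hmem
        by_cases h0 : ArithmeticFunction.moebius x = 0
        · right; exact h0
        · left
          by_contra hylt
          push_neg at hylt
          have h2 := hcrit x y hmem (by omega) h0
          have hy0 : y ≠ 0 := hpow_dvd x y hmem
          have h3 : 2^(a-1) ≤ y := Nat.le_of_dvd (by omega) h2
          have h4 := lt_two_pow_pred hbig
          omega
      apply conclude_even
      rw [hdZ, pow_succ, mul_assoc] at hall
      rw [hMdef]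
      exact (mul_dvd_mul_iff_left (a := (2:ℤ)^a) (by positivity)).mp hall
    · rintro (⟨hev, hsf⟩ | ⟨m', hodd', hsf', heq⟩)
      · have h4 : 2*2 ∣ d := by
          refine dvd_trans (by norm_num : (2*2:ℕ) ∣ 2^2) (dvd_trans (pow_dvd_pow 2 (by omega)) ⟨m, hdm.symm⟩)
        exact absurd (Nat.isUnit_iff.mp (hsf 2 h4)) (by norm_num)
      · exact absurd (hfact4 m' hodd' heq) (by omega)
  · have haval : a = 0 ∨ a = 1 ∨ a = 2 := by omega
    rcases haval with rfl | rfl | rfl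
    · -- a = 0 : d odd, Nd even, RHS false
      have hd2 : ¬ 2 ∣ d := by
        intro h2
        rw [← hdm, pow_zero, one_mul] at h2
        omega
      apply iff_of_false
      · have hall : (2:ℤ) ∣ (d:ℤ) * Nd d := by
          rw [← hS]
          apply Finset.dvd_sum
          rintro ⟨x, y⟩ hxy
          have hmem := (Nat.mem_divisorsAntidiagonal.mp hxy).1
          have hy0 : y ≠ 0 := hpow_dvd x y hmem
          have h1 := hterm x y hmem (Or.inl (by omega))
          rwa [pow_one] at h1
        apply conclude_even
        rw [hdZ, pow_zero, one_mul] at hall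
        rwa [hMdef]
      · rintro (⟨hev, hsf⟩ | ⟨m', hodd', hsf', heq⟩)
        · exact hd2 (even_iff_two_dvd.mp hev)
        · exact hd2 (heq ▸ ⟨2 * m', by ring⟩)
    · -- a = 1
      have hcmem : ((d, 1) : ℕ × ℕ) ∈ d.divisorsAntidiagonal :=
        Nat.mem_divisorsAntidiagonal.mpr ⟨mul_one d, hd0⟩
      have hsplit := Finset.sum_erase_add d.divisorsAntidiagonal
        (fun x => ArithmeticFunction.moebius x.1 • ((2:ℤ)^x.2)) hcmem
      have hrest : (4:ℤ) ∣ ∑ x ∈ d.divisorsAntidiagonal.erase (d,1),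
          ArithmeticFunction.moebius x.1 • ((2:ℤ)^x.2) := by
        apply Finset.dvd_sum
        rintro ⟨x, y⟩ hxy
        have hmem := (Nat.mem_divisorsAntidiagonal.mp (Finset.mem_of_mem_erase hxy)).1
        have hne := Finset.ne_of_mem_erase hxy
        have hy0 : y ≠ 0 := hpow_dvd x y hmem
        have hy2 : 2 ≤ y := by
          by_contra hlt
          push_neg at hlt
          have hy1 : y = 1 := by omega
          apply hne
          have hx : x = d := by rw [hy1, mul_one] at hmem; exact hmem
          rw [hy1, hx]
        have h1 := hterm x y hmem (Or.inl (by omega))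
        have h2 : (2:ℤ)^(1+1) = 4 := by norm_num
        rwa [h2] at h1
      obtain ⟨k, hk⟩ := hrest
      have heq2 : (ArithmeticFunction.moebius d : ℤ) * 2 + 4 * k = 2 * M := by
        rw [hk] at hsplit
        have h3 : (d:ℤ) * (Nd d : ℤ) = 2 * M := by
          rw [hMdef, hdZ]; ring
        rw [hS, h3] at hsplit
        rw [← hsplit]
        simp only [smul_eq_mul]
        ring
      by_cases hsf : Squarefree d
      · apply iff_of_true
        · have hμ : ArithmeticFunction.moebius d = 1 ∨ ArithmeticFunction.moebius d = -1 := by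
            rw [moebius_apply_of_squarefree hsf]
            rcases Nat.even_or_odd (cardFactors d) with he | ho
            · left; exact he.neg_one_pow
            · right; exact ho.neg_one_pow
          rcases hμ with hμ | hμ <;> rw [hμ] at heq2
          · exact conclude_odd k (by omega)
          · exact conclude_odd (k - 1) (by omega)
        · exact Or.inl ⟨even_iff_two_dvd.mpr ⟨m, by omega⟩, hsf⟩
      · apply iff_of_false
        · rw [moebius_eq_zero_of_not_squarefree hsf] at heq2
          apply conclude_even
          exact ⟨k, by omega⟩
        · rintro (⟨hev, hsf'⟩ | ⟨m', hodd', hsf', heq⟩)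
          · exact hsf hsf'
          · exact absurd (hfact4 m' hodd' heq) (by omega)
    · -- a = 2
      have hd4 : d = 4 * m := by omega
      have hcmem : ((2 * m, 2) : ℕ × ℕ) ∈ d.divisorsAntidiagonal :=
        Nat.mem_divisorsAntidiagonal.mpr ⟨by omega, hd0⟩
      have hsplit := Finset.sum_erase_add d.divisorsAntidiagonal
        (fun x => ArithmeticFunction.moebius x.1 • ((2:ℤ)^x.2)) hcmem
      have hrest : (8:ℤ) ∣ ∑ x ∈ d.divisorsAntidiagonal.erase (2*m,2),
          ArithmeticFunction.moebius x.1 • ((2:ℤ)^x.2) := by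
        apply Finset.dvd_sum
        rintro ⟨x, y⟩ hxy
        have hmem := (Nat.mem_divisorsAntidiagonal.mp (Finset.mem_of_mem_erase hxy)).1
        have hne := Finset.ne_of_mem_erase hxy
        have hy0 : y ≠ 0 := hpow_dvd x y hmem
        have hy3 : 2 < y ∨ ArithmeticFunction.moebius x = 0 := by
          by_cases h0 : ArithmeticFunction.moebius x = 0
          · right; exact h0
          · left
            by_contra hlt
            push_neg at hlt
            have h2 := hcrit x y hmem (by omega) h0
            norm_num at h2
            have hy2 : y = 2 := by omega
            apply hne
            have hx : x = 2 * m := by rw [hy2] at hmem; omega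
            rw [hy2, hx]
        have h1 := hterm x y hmem (by omega)
        have h2 : (2:ℤ)^(2+1) = 8 := by norm_num
        rwa [h2] at h1
      obtain ⟨k, hk⟩ := hrest
      have heq2 : (ArithmeticFunction.moebius (2*m) : ℤ) * 4 + 8 * k = 4 * M := by
        rw [hk] at hsplit
        have h3 : (d:ℤ) * (Nd d : ℤ) = 4 * M := by
          rw [hMdef, hdZ]; ring
        rw [hS, h3] at hsplit
        rw [← hsplit]
        simp only [smul_eq_mul]
        ring
      by_cases hsfm : Squarefree m
      · apply iff_of_true
        · have hsf2m : Squarefree (2*m) := by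
            rw [Nat.squarefree_mul_iff]
            exact ⟨(Nat.Prime.coprime_iff_not_dvd Nat.prime_two).mpr hmodd, Nat.prime_two.squarefree, hsfm⟩
          have hμ : ArithmeticFunction.moebius (2*m) = 1 ∨ ArithmeticFunction.moebius (2*m) = -1 := by
            rw [moebius_apply_of_squarefree hsf2m]
            rcases Nat.even_or_odd (cardFactors (2*m)) with he | ho
            · left; exact he.neg_one_pow
            · right; exact ho.neg_one_pow
          rcases hμ with hμ | hμ <;> rw [hμ] at heq2
          · exact conclude_odd k (by omega)
          · exact conclude_odd (k - 1) (by omega)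
        · exact Or.inr ⟨m, hoddm, hsfm, hd4⟩
      · apply iff_of_false
        · have hnsf2m : ¬ Squarefree (2*m) := by
            intro h
            exact hsfm (h.squarefree_of_dvd (dvd_mul_left m 2))
          rw [moebius_eq_zero_of_not_squarefree hnsf2m] at heq2
          apply conclude_even
          exact ⟨k, by omega⟩
        · rintro (⟨hev, hsf'⟩ | ⟨m', hodd', hsf', heq⟩)
          · exact hsfm (hsf'.squarefree_of_dvd ⟨4, by omega⟩)
          · have : m' = m := by omega
            exact hsfm (this ▸ hsf')

lemma RatFunc.intDegree_div' {x y : RatFunc F2} (hx : x ≠ 0) (hy : y ≠ 0) :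
    (x / y).intDegree = x.intDegree - y.intDegree := by
  have h : (x / y) * y = x := div_mul_cancel₀ x hy
  have h2 := RatFunc.intDegree_mul (div_ne_zero hx hy) hy
  rw [h] at h2
  omega

/-- (q = 2, k odd, d ≥ 1) (a) If `d` is odd squarefree then `P_d(k) ≠ 0` and its valuation
at infinity is `dk + 1`; (b) if `d` is even squarefree, or `d = 4m` with `m` odd squarefree,
then `P_d(k) ≠ 0` with valuation `dk`; (c) otherwise `P_d(k) = 0` or the valuation
exceeds `dk + 1`. -/
theorem stmt_12 (d k : ℕ) (hd : 1 ≤ d) (hk0 : 0 < k) (hk : Odd k) :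
    (Odd d ∧ Squarefree d →
      Pd (ZMod 2) d k ≠ 0 ∧ -(Pd (ZMod 2) d k).intDegree = ((d * k + 1 : ℕ) : ℤ)) ∧
    ((Even d ∧ Squarefree d) ∨ (∃ m : ℕ, Odd m ∧ Squarefree m ∧ d = 4 * m) →
      Pd (ZMod 2) d k ≠ 0 ∧ -(Pd (ZMod 2) d k).intDegree = ((d * k : ℕ) : ℤ)) ∧
    (¬(Squarefree d ∨ ∃ m : ℕ, Odd m ∧ Squarefree m ∧ d = 4 * m) →
      Pd (ZMod 2) d k = 0 ∨ ((d * k + 1 : ℕ) : ℤ) < -(Pd (ZMod 2) d k).intDegree) := by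
  classical
  have hdk1 : 1 ≤ d * k := Nat.mul_pos hd hk0
  set s := irrF d with hs
  set N := Nd d with hN
  set b : Polynomial F2 → Polynomial F2 := fun ℘ => ℘ ^ k + 1 with hbdef
  -- basic facts about b ℘
  have hbfacts : ∀ ℘ ∈ s, (b ℘).Monic ∧ (b ℘).natDegree = d * k := by
    intro ℘ h℘
    obtain ⟨hm, hi, hdeg⟩ := mem_irrF.mp h℘
    have hpk : (℘ ^ k).Monic := hm.pow k
    have hdegk : (℘ ^ k).natDegree = d * k := by rw [hm.natDegree_pow, hdeg, Nat.mul_comm]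
    have hlt : (1 : Polynomial F2).degree < (℘ ^ k).degree := by
      rw [degree_one, degree_eq_natDegree hpk.ne_zero, hdegk]
      exact_mod_cast hdk1
    constructor
    · rw [hbdef]
      exact hpk.add_of_left hlt
    · rw [hbdef]
      have := degree_add_eq_left_of_degree_lt hlt
      rw [← hdegk]
      exact natDegree_eq_of_degree_eq this
  have hb0 : ∀ ℘ ∈ s, b ℘ ≠ 0 := fun ℘ h => (hbfacts ℘ h).1.ne_zero
  -- char 2 rewrite
  haveI : CharP (RatFunc F2) 2 :=
    charP_of_injective_algebraMap (RatFunc.algebraMap_injective F2) 2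
  have hch : ∀ ℘ : Polynomial F2,
      (1 : RatFunc F2) - algebraMap (Polynomial F2) (RatFunc F2) ℘ ^ k
        = algebraMap (Polynomial F2) (RatFunc F2) (b ℘) := by
    intro ℘
    rw [CharTwo.sub_eq_add, hbdef, map_add, map_one, map_pow, add_comm]
  -- Pd as finite sum
  have hPd : Pd (ZMod 2) d k = ∑ ℘ ∈ s, (algebraMap (Polynomial F2) (RatFunc F2) (b ℘))⁻¹ := by
    rw [Pd]
    have hset : {P : Polynomial (ZMod 2) | P.Monic ∧ Irreducible P ∧ P.natDegree = d}
        = ↑s := by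
      rw [hs]
      exact (Set.Finite.coe_toFinset _).symm
    rw [hset, finsum_mem_coe_finset]
    exact Finset.sum_congr rfl fun ℘ _ => by rw [hch ℘]
  -- A and B
  set B : Polynomial F2 := ∏ ℘ ∈ s, b ℘ with hB
  set A : Polynomial F2 := ∑ ℘ ∈ s, ∏ ℘' ∈ s.erase ℘, b ℘' with hA
  have hBmonic : B.Monic := monic_prod_of_monic _ _ fun ℘ h => (hbfacts ℘ h).1
  have hB0 : B ≠ 0 := hBmonic.ne_zero
  have hBdeg : B.natDegree = N * (d * k) := by
    rw [hB, natDegree_prod _ _ fun ℘ h => hb0 ℘ h]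
    rw [Finset.sum_congr rfl fun ℘ h => (hbfacts ℘ h).2, Finset.sum_const, smul_eq_mul]
    rfl
  have halgB0 : algebraMap (Polynomial F2) (RatFunc F2) B ≠ 0 := by
    intro h
    exact hB0 (RatFunc.algebraMap_injective F2 (by rw [h, _root_.map_zero]))
  -- Pd = A / B
  have hPd2 : Pd (ZMod 2) d k
      = algebraMap (Polynomial F2) (RatFunc F2) A / algebraMap (Polynomial F2) (RatFunc F2) B := by
    rw [hPd, hA, map_sum, Finset.sum_div]
    apply Finset.sum_congr rfl
    intro ℘ h℘
    rw [map_prod]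
    have hsplitB : algebraMap (Polynomial F2) (RatFunc F2) B
        = algebraMap (Polynomial F2) (RatFunc F2) (b ℘)
          * ∏ ℘' ∈ s.erase ℘, algebraMap (Polynomial F2) (RatFunc F2) (b ℘') := by
      rw [hB, map_prod, ← Finset.mul_prod_erase _ (fun x => algebraMap (Polynomial F2) (RatFunc F2) (b x)) h℘]
    rw [hsplitB]
    have hx0 : algebraMap (Polynomial F2) (RatFunc F2) (b ℘) ≠ 0 := by
      intro h
      exact hb0 ℘ h℘ (RatFunc.algebraMap_injective F2 (by rw [h, _root_.map_zero]))
    rw [eq_comm, div_eq_iff (by rw [← hsplitB]; exact halgB0), inv_mul_cancel_left₀ hx0]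
  -- products over erased sets
  set D1 := (N - 1) * (d * k) with hD1
  have hprodfacts : ∀ ℘ ∈ s, (∏ ℘' ∈ s.erase ℘, b ℘').Monic
      ∧ (∏ ℘' ∈ s.erase ℘, b ℘').natDegree = D1 := by
    intro ℘ h℘
    constructor
    · exact monic_prod_of_monic _ _ fun ℘' h' => (hbfacts ℘' (Finset.mem_of_mem_erase h')).1
    · rw [natDegree_prod _ _ fun ℘' h' => hb0 ℘' (Finset.mem_of_mem_erase h')]
      rw [Finset.sum_congr rfl fun ℘' h' => (hbfacts ℘' (Finset.mem_of_mem_erase h')).2,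
        Finset.sum_const, smul_eq_mul, Finset.card_erase_of_mem h℘, hD1]
      rfl
  have hdegA : A.natDegree ≤ D1 := by
    rw [hA]
    exact natDegree_sum_le_of_forall_le _ _ fun ℘ h℘ => le_of_eq (hprodfacts ℘ h℘).2
  have hcoefftop : A.coeff D1 = (N : F2) := by
    rw [hA, finset_sum_coeff]
    rw [Finset.sum_congr rfl fun ℘ h℘ => ?_, Finset.sum_const, nsmul_eq_mul, mul_one]
    · rfl
    · rw [← (hprodfacts ℘ h℘).2]
      exact (hprodfacts ℘ h℘).1.coeff_natDegree
  -- intDegree formula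
  have hint : A ≠ 0 → (Pd (ZMod 2) d k).intDegree = (A.natDegree : ℤ) - (B.natDegree : ℤ) := by
    intro hA0
    have halgA0 : algebraMap (Polynomial F2) (RatFunc F2) A ≠ 0 := by
      intro h
      exact hA0 (RatFunc.algebraMap_injective F2 (by rw [h, _root_.map_zero]))
    rw [hPd2, RatFunc.intDegree_div' halgA0 halgB0, RatFunc.intDegree_polynomial,
      RatFunc.intDegree_polynomial]
  have hPdne : A ≠ 0 → Pd (ZMod 2) d k ≠ 0 := by
    intro hA0
    have halgA0 : algebraMap (Polynomial F2) (RatFunc F2) A ≠ 0 := by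
      intro h
      exact hA0 (RatFunc.algebraMap_injective F2 (by rw [h, _root_.map_zero]))
    rw [hPd2]
    exact div_ne_zero halgA0 halgB0
  -- next coefficient analysis (for N even cases)
  have hsempty : N = 0 → A = 0 := by
    intro hNz
    rw [hA]
    have hse : s = ∅ := Finset.card_eq_zero.mp hNz
    rw [hse]
    rfl
  have hsubcoeff : (N : F2) = 0 → N ≠ 0 → A.coeff (D1 - 1) = TT d := by
    intro hN2 hNne
    have hkcast : (k : F2) = 1 := by
      rw [← ZMod.natCast_mod, Nat.odd_iff.mp hk]
      rfl
    have hu : ∀ ℘ ∈ s, (b ℘).nextCoeff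
        = ℘.nextCoeff + (if d * k - 1 = 0 then 1 else 0) := by
      intro ℘ h℘
      obtain ⟨hm, hi, hdeg⟩ := mem_irrF.mp h℘
      have hdegb := (hbfacts ℘ h℘).2
      rw [nextCoeff_of_natDegree_pos (by omega : 0 < (b ℘).natDegree), hdegb]
      rw [hbdef]
      simp only [coeff_add, Polynomial.coeff_one]
      have hpk : (℘ ^ k).Monic := hm.pow k
      have hdegk : (℘ ^ k).natDegree = d * k := by rw [hm.natDegree_pow, hdeg, Nat.mul_comm]
      have : (℘ ^ k).coeff (d * k - 1) = ℘.nextCoeff := by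
        rw [← hdegk, ← nextCoeff_of_natDegree_pos (by rw [hdegk]; omega)]
        rw [hm.nextCoeff_pow, nsmul_eq_mul, hkcast, one_mul]
      rw [this]
    -- sum of nextCoeffs
    set U : F2 := ∑ ℘ ∈ s, (b ℘).nextCoeff with hU
    have hUval : U = TT d := by
      rw [hU, Finset.sum_congr rfl hu, Finset.sum_add_distrib, Finset.sum_const, nsmul_eq_mul]
      have hcard : ((s.card : ℕ) : F2) = (N : F2) := by norm_cast
      rw [hcard, hN2, zero_mul, add_zero]
      rfl
    have hN2' : N ≠ 1 := by
      intro h1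
      rw [h1] at hN2
      simp at hN2
    have hNge : 2 ≤ N := by omega
    have hD1pos : 0 < D1 := by
      rw [hD1]
      have h1 : 1 ≤ N - 1 := by omega
      exact Nat.mul_pos h1 hdk1
    have hcoeffsub : ∀ ℘ ∈ s, (∏ ℘' ∈ s.erase ℘, b ℘').coeff (D1 - 1)
        = U - (b ℘).nextCoeff := by
      intro ℘ h℘
      have h1 := (hprodfacts ℘ h℘).1
      have h2 := (hprodfacts ℘ h℘).2
      rw [← h2, ← nextCoeff_of_natDegree_pos (by rw [h2]; omega)]
      rw [Polynomial.Monic.nextCoeff_prod _ _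
        (fun ℘' h' => (hbfacts ℘' (Finset.mem_of_mem_erase h')).1)]
      rw [hU, eq_sub_iff_add_eq, Finset.sum_erase_add _ _ h℘]
    rw [hA, finset_sum_coeff, Finset.sum_congr rfl hcoeffsub, Finset.sum_sub_distrib,
      Finset.sum_const, nsmul_eq_mul]
    have hcard : ((s.card : ℕ) : F2) = (N : F2) := by norm_cast
    rw [hcard, hN2, zero_mul, zero_sub, ← hU, hUval]
    exact CharTwo.neg_eq _
  -- final assembly
  have hcast0 : ¬ Odd N → (N : F2) = 0 := by
    intro h
    rw [Nat.odd_iff] at h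
    rw [← ZMod.natCast_mod]
    have h2 : N % 2 = 0 := by omega
    rw [h2]
    rfl
  have hcast1 : Odd N → (N : F2) = 1 := by
    intro h
    rw [← ZMod.natCast_mod, Nat.odd_iff.mp h]
    rfl
  have hmulkey : 1 ≤ N → D1 + d * k = N * (d * k) := by
    intro h1N
    rw [hD1]
    have h2 := Nat.sub_one_mul N (d*k)
    have h3 : d*k ≤ N * (d*k) := Nat.le_mul_of_pos_left _ (by omega)
    omega
  refine ⟨?_, ?_, ?_⟩
  · -- case (a)
    rintro ⟨hodd, hsf⟩
    have hRHSfalse : ¬ ((Even d ∧ Squarefree d) ∨ ∃ m, Odd m ∧ Squarefree m ∧ d = 4 * m) := by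
      rintro (⟨hev, _⟩ | ⟨m', _, _, rfl⟩)
      · exact (Nat.not_even_iff_odd.mpr hodd) hev
      · exact (Nat.not_even_iff_odd.mpr hodd) ⟨2 * m', by ring⟩
    have hNodd : ¬ Odd N := fun h => hRHSfalse ((Nd_odd_iff hd).mp h)
    have hN2 : (N : F2) = 0 := hcast0 hNodd
    have hTT : TT d = 1 := by rw [TT_eq hd, if_pos hsf]
    have hNne : N ≠ 0 := by
      intro h0
      have hse : irrF d = ∅ := Finset.card_eq_zero.mp h0
      rw [TT, hse, Finset.sum_empty] at hTT
      exact one_ne_zero hTT.symm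
    have hcoeff : A.coeff (D1 - 1) = 1 := by rw [hsubcoeff hN2 hNne, hTT]
    have hA0 : A ≠ 0 := by
      intro h
      rw [h, coeff_zero] at hcoeff
      exact one_ne_zero hcoeff.symm
    have htop0 : A.coeff D1 = 0 := by rw [hcoefftop, hN2]
    have hD1ge : d * k ≤ D1 := by
      have hNodd' : N % 2 = 0 := by rw [Nat.odd_iff] at hNodd; omega
      have hNge2 : 2 ≤ N := by omega
      rw [hD1]
      calc d * k = 1 * (d * k) := (one_mul _).symm
        _ ≤ (N - 1) * (d * k) := Nat.mul_le_mul_right _ (by omega)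
    have hdegAeq : A.natDegree = D1 - 1 := by
      have hle : A.natDegree ≤ D1 - 1 := by
        by_contra hgt
        push_neg at hgt
        have heq : A.natDegree = D1 := by omega
        exact (Polynomial.leadingCoeff_ne_zero.mpr hA0)
          (by rw [Polynomial.leadingCoeff, heq, htop0])
      have hge : D1 - 1 ≤ A.natDegree :=
        Polynomial.le_natDegree_of_ne_zero (by rw [hcoeff]; exact one_ne_zero)
      omega
    refine ⟨hPdne hA0, ?_⟩
    rw [hint hA0, hdegAeq, hBdeg]
    have h1 := hmulkey (by omega)
    omega
  · -- case (b)
    intro hC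
    have hNodd : Odd N := (Nd_odd_iff hd).mpr hC
    have hN2 : (N : F2) = 1 := hcast1 hNodd
    have hcoeff : A.coeff D1 = 1 := by rw [hcoefftop, hN2]
    have hA0 : A ≠ 0 := by
      intro h
      rw [h, coeff_zero] at hcoeff
      exact one_ne_zero hcoeff.symm
    have hdegAeq : A.natDegree = D1 :=
      le_antisymm hdegA (Polynomial.le_natDegree_of_ne_zero (by rw [hcoeff]; exact one_ne_zero))
    refine ⟨hPdne hA0, ?_⟩
    rw [hint hA0, hdegAeq, hBdeg]
    have h1 := hmulkey (by rcases hNodd with ⟨t, ht⟩; omega)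
    omega
  · -- case (c)
    intro hnot
    by_cases hNne : N = 0
    · left
      rw [hPd2, hsempty hNne, _root_.map_zero, zero_div]
    · have hRHSfalse : ¬ ((Even d ∧ Squarefree d) ∨ ∃ m, Odd m ∧ Squarefree m ∧ d = 4 * m) := by
        rintro (⟨_, hsf⟩ | h)
        · exact hnot (Or.inl hsf)
        · exact hnot (Or.inr h)
      have hNodd : ¬ Odd N := fun h => hRHSfalse ((Nd_odd_iff hd).mp h)
      have hN2 : (N : F2) = 0 := hcast0 hNodd
      have hTT : TT d = 0 := by
        rw [TT_eq hd, if_neg (fun h => hnot (Or.inl h))]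
      have hcoeff : A.coeff (D1 - 1) = 0 := by rw [hsubcoeff hN2 hNne, hTT]
      have htop0 : A.coeff D1 = 0 := by rw [hcoefftop, hN2]
      by_cases hA0 : A = 0
      · left
        rw [hPd2, hA0, _root_.map_zero, zero_div]
      · right
        have hne1 : A.natDegree ≠ D1 := by
          intro heq
          exact (Polynomial.leadingCoeff_ne_zero.mpr hA0)
            (by rw [Polynomial.leadingCoeff, heq, htop0])
        have hne2 : A.natDegree ≠ D1 - 1 := by
          intro heq
          exact (Polynomial.leadingCoeff_ne_zero.mpr hA0)
            (by rw [Polynomial.leadingCoeff, heq, hcoeff])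
        have hle2 : A.natDegree + 2 ≤ D1 := by omega
        rw [hint hA0, hBdeg]
        have h1 := hmulkey (by omega)
        omega
end

section
/- Let q > 2 be a prime power and n ≥ 1. Then in F_q(t), the sum over all θ ∈ F_q of (1 - (t+θ)^{q^n - 1})^{-1} equals 0. (Equivalently, P_1(q^n - 1) = 0, since the monic irreducible polynomials of degree 1 in F_q[t] are exactly the t + θ with θ ∈ F_q.) -/
/-- (q > 2, n ≥ 1) In `F_q(t)`, `Σ_{θ ∈ F_q} 1/(1 - (t+θ)^{q^n - 1}) = 0`;
i.e. `P_1(q^n - 1) = 0`. -/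
theorem stmt_13 (Fq : Type*) [Field Fq] [Fintype Fq] (hq : 2 < Fintype.card Fq)
    (n : ℕ) (hn : 1 ≤ n) :
    ∑ θ : Fq, (1 - (RatFunc.X + RatFunc.C θ) ^ (Fintype.card Fq ^ n - 1))⁻¹ =
      (0 : RatFunc Fq) := by
  classical
  set q := Fintype.card Fq with hqdef
  set p := ringChar Fq with hpdef
  haveI : CharP Fq p := ringChar.charP Fq
  obtain ⟨m, hp, hcard⟩ := FiniteField.card Fq p
  haveI : Fact p.Prime := ⟨hp⟩
  haveI : CharP (RatFunc Fq) p :=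
    charP_of_injective_algebraMap (algebraMap Fq (RatFunc Fq)).injective p
  have hqn1 : 1 ≤ q ^ n := Nat.one_le_pow _ _ (by omega)
  -- Frobenius computation
  have hfrob : ∀ θ : Fq, (RatFunc.X + RatFunc.C θ) ^ (q ^ n) =
      RatFunc.X ^ (q ^ n) + RatFunc.C θ := by
    intro θ
    have h1 : q ^ n = p ^ ((m : ℕ) * n) := by rw [hqdef, hcard, pow_mul]
    rw [h1, add_pow_char_pow]
    congr 1
    rw [← map_pow, ← h1]
    congr 1
    exact FiniteField.pow_card_pow n θ
  -- the denominator
  set D : RatFunc Fq := RatFunc.X - RatFunc.X ^ (q ^ n) with hD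
  have hDne : D ≠ 0 := by
    have : (Polynomial.X - Polynomial.X ^ (q ^ n) : Polynomial Fq) ≠ 0 := by
      intro h
      have hdeg := congrArg Polynomial.natDegree h
      rw [Polynomial.natDegree_sub_eq_right_of_natDegree_lt, Polynomial.natDegree_X_pow] at hdeg
      · have : 1 < q ^ n := by
          calc 1 < q := by omega
          _ ≤ q ^ n := Nat.le_self_pow (by omega) q
        simp at hdeg; omega
      · rw [Polynomial.natDegree_X_pow, Polynomial.natDegree_X]
        calc 1 < q := by omega
        _ ≤ q ^ n := Nat.le_self_pow (by omega) q
    intro h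
    apply this
    apply RatFunc.algebraMap_injective Fq
    rw [map_sub, map_pow, RatFunc.algebraMap_X, map_zero]
    exact h ▸ hD
  -- per-term identity
  have hterm : ∀ θ : Fq, (1 - (RatFunc.X + RatFunc.C θ) ^ (q ^ n - 1))⁻¹ =
      (RatFunc.X + RatFunc.C θ) * D⁻¹ := by
    intro θ
    set f : RatFunc Fq := RatFunc.X + RatFunc.C θ with hf
    have hfne : f ≠ 0 := by
      intro h
      have : (Polynomial.X + Polynomial.C θ : Polynomial Fq) ≠ 0 :=
        Polynomial.X_add_C_ne_zero θ
      apply this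
      apply RatFunc.algebraMap_injective Fq
      rw [map_add, RatFunc.algebraMap_X, RatFunc.algebraMap_C, map_zero]
      exact h
    have key : 1 - f ^ (q ^ n - 1) = D * f⁻¹ := by
      have hpow : f ^ (q ^ n - 1) * f = f ^ (q ^ n) := by
        rw [← pow_succ, Nat.sub_add_cancel hqn1]
      rw [← div_eq_mul_inv, eq_div_iff hfne, sub_mul, one_mul, hpow, hfrob θ, hD, hf]
      ring
    rw [key, mul_inv, inv_inv, mul_comm]
  rw [Finset.sum_congr rfl (fun θ _ => hterm θ), ← Finset.sum_mul]
  have hsum : ∑ θ : Fq, (RatFunc.X + RatFunc.C θ) = 0 := by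
    rw [Finset.sum_add_distrib, Finset.sum_const, ← map_sum]
    have h1 : ∑ θ : Fq, θ = 0 := by
      have := FiniteField.sum_pow_lt_card_sub_one Fq 1 (by omega)
      simpa using this
    rw [h1, map_zero, add_zero, Finset.card_univ, ← hqdef]
    have : (q : RatFunc Fq) = 0 := by
      have h2 : (q : Fq) = 0 := FiniteField.cast_card_eq_zero Fq
      rw [← map_natCast (algebraMap Fq (RatFunc Fq)) q, h2, map_zero]
    rw [nsmul_eq_mul, this, zero_mul]
  rw [hsum, zero_mul]
end

section
/- Let q = 2^m with m ≥ 3 (so q > 4), and let n ≥ 1. Then P_2(q^n - 1) = 0; that is, in F_q(t) the sum of (1 - ℘^{q^n-1})^{-1} over all monic irreducible polynomials ℘ ∈ F_q[t] of degree 2 equals 0. -/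
open Polynomial Finset

/-- The sum of all elements of a finite `ZMod 2`-module of cardinality at least `4` is zero. -/
lemma sum_univ_fun_zmod_aux {d : ℕ} (hd : 2 ≤ d) : ∑ w : Fin d → ZMod 2, w = 0 := by
  funext i
  rw [Finset.sum_apply]
  have key : ∀ w : Fin d → ZMod 2, w i = ((Equiv.funSplitAt i (ZMod 2)) w).1 := fun _ => rfl
  rw [Fintype.sum_equiv (Equiv.funSplitAt i (ZMod 2)) _ (fun p => p.1) key]
  rw [Fintype.sum_prod_type]
  simp only [Finset.sum_const, Pi.zero_apply]
  have h1 : ∑ x : ZMod 2, (Fintype.card ({ j // j ≠ i } → ZMod 2)) • x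
      = (Fintype.card ({ j // j ≠ i } → ZMod 2)) • (∑ x : ZMod 2, x) := by
    rw [Finset.smul_sum]
  have h2 : (∑ x : ZMod 2, x) = 1 := by decide
  have h3 : Fintype.card ({ j // j ≠ i } → ZMod 2) = 2 ^ Fintype.card { j // j ≠ i } := by
    simp [Fintype.card_fun]
  haveI : Nontrivial (Fin d) := Fin.nontrivial_iff_two_le.mpr hd
  obtain ⟨j, hj⟩ := exists_ne i
  haveI : Nonempty { j // j ≠ i } := ⟨⟨j, hj⟩⟩
  have h4 : Fintype.card { j // j ≠ i } ≠ 0 := Fintype.card_ne_zero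
  have h5 : ((2:ZMod 2)) = 0 := by decide
  rw [Finset.card_univ, h1, h2, h3, nsmul_eq_mul, mul_one]
  push_cast
  rw [h5, zero_pow h4]

lemma sum_univ_eq_zero_of_card (M : Type*) [AddCommGroup M] [Module (ZMod 2) M] [Fintype M]
    (h : 4 ≤ Fintype.card M) : ∑ x : M, x = 0 := by
  have hfin : Module.Finite (ZMod 2) M := Module.Finite.of_finite
  set d := Module.finrank (ZMod 2) M with hdef
  have hcard : Fintype.card M = 2 ^ d := by
    simpa using Module.card_fintype (Module.finBasis (ZMod 2) M)
  have hd : 2 ≤ d := by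
    by_contra hlt
    push_neg at hlt
    have : (2:ℕ) ^ d ≤ 2 ^ 1 := Nat.pow_le_pow_right (by norm_num) (by omega)
    omega
  let e := (Module.finBasis (ZMod 2) M).equivFun
  have h1 : ∑ x : M, x = ∑ x : M, e.symm (e x) := by simp
  rw [h1, ← map_sum]
  have h2 : ∑ x : M, e x = ∑ w : Fin d → ZMod 2, w := Equiv.sum_comp e.toEquiv id
  rw [h2, sum_univ_fun_zmod_aux hd, map_zero]

/-- (q = 2^m, m ≥ 3, n ≥ 1) `P_2(q^n - 1) = 0` in `F_q(t)`. -/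
theorem stmt_14 (Fq : Type*) [Field Fq] [Fintype Fq] (m : ℕ) (hm : 3 ≤ m)
    (hcard : Fintype.card Fq = 2 ^ m) (n : ℕ) (hn : 1 ≤ n) :
    Pd Fq 2 (Fintype.card Fq ^ n - 1) = 0 := by
  classical
  -- characteristic 2
  haveI hchar : CharP Fq 2 := by
    have h1 : ((Fintype.card Fq : Fq)) = 0 := FiniteField.cast_card_eq_zero Fq
    rw [hcard] at h1
    push_cast at h1
    have h2 : (2 : Fq) = 0 := pow_eq_zero_iff (n := m) (by omega) |>.mp h1
    haveI := ringChar.charP Fq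
    have h3 : ringChar Fq ∣ 2 :=
      (CharP.cast_eq_zero_iff Fq (ringChar Fq) 2).mp (by exact_mod_cast h2)
    have h4 : (ringChar Fq).Prime := CharP.char_is_prime Fq (ringChar Fq)
    have h5 : ringChar Fq = 2 := (Nat.prime_dvd_prime_iff_eq h4 Nat.prime_two).mp h3
    rw [← h5]; exact ringChar.charP Fq
  haveI : Fact (Nat.Prime 2) := ⟨Nat.prime_two⟩
  have h2 : (2 : Fq) = 0 := by exact_mod_cast CharP.cast_eq_zero Fq 2
  have haddcancel : ∀ x y : Fq, x + y = 0 → x = y := by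
    intro x y h
    have := CharTwo.add_eq_iff_eq_add.mp h
    simpa using this
  have hQ2 : 2 ≤ Fintype.card Fq := by
    rw [hcard]
    calc (2:ℕ) = 2^1 := (pow_one 2).symm
    _ ≤ 2^m := Nat.pow_le_pow_right (by norm_num) (by omega)
  set k := Fintype.card Fq ^ n - 1 with hk
  have hQn1 : 1 < Fintype.card Fq ^ n := by
    calc 1 < Fintype.card Fq := by omega
    _ = Fintype.card Fq ^ 1 := (pow_one _).symm
    _ ≤ Fintype.card Fq ^ n := Nat.pow_le_pow_right (by omega) (by omega)
  have hqn : Fintype.card Fq ^ n = k + 1 := by rw [hk]; omega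
  -- the parametrization
  set f : Fq × Fq → Polynomial Fq := fun bc => X^2 + C bc.1 * X + C bc.2 with hf
  have hmon : ∀ bc : Fq × Fq, (f bc).Monic := by intro bc; simp only [hf]; monicity!
  have hdeg : ∀ bc : Fq × Fq, (f bc).natDegree = 2 := by
    intro bc; simp only [hf]; compute_degree!
  have hinj : Function.Injective f := by
    rintro ⟨b₁, c₁⟩ ⟨b₂, c₂⟩ h
    simp only [Prod.mk.injEq]
    constructor
    · have := congrArg (fun p => Polynomial.coeff p 1) h
      simpa [hf, coeff_X_pow] using this
    · have := congrArg (fun p => Polynomial.coeff p 0) h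
      simpa [hf] using this
  have hset : {P : Polynomial Fq | P.Monic ∧ Irreducible P ∧ P.natDegree = 2}
      = ↑((univ.filter (fun bc : Fq × Fq => Irreducible (f bc))).image f) := by
    ext P
    simp only [Set.mem_setOf_eq, Finset.coe_image, Set.mem_image, Finset.mem_coe,
      Finset.mem_filter, Finset.mem_univ, true_and]
    constructor
    · rintro ⟨hP, hirr, hd2⟩
      have hPeq : P = f (P.coeff 1, P.coeff 0) := by
        ext i
        have hlc : P.coeff 2 = 1 := by
          have := hP.leadingCoeff
          rwa [leadingCoeff, hd2] at this
        match i with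
        | 0 => simp [hf]
        | 1 => simp [hf, coeff_X_pow]
        | 2 => simp [hf, hlc, coeff_X_pow]
        | (j+3) =>
          have h1 : P.coeff (j+3) = 0 := coeff_eq_zero_of_natDegree_lt (by omega)
          have hXp : ((X:Polynomial Fq)^2).coeff (j+3) = 0 := by simp [coeff_X_pow]
          simp [hf, h1, hXp, coeff_X_pow]
      exact ⟨(P.coeff 1, P.coeff 0), by rwa [← hPeq], hPeq.symm⟩
    · rintro ⟨bc, hirr, rfl⟩
      exact ⟨hmon bc, hirr, hdeg bc⟩
  rw [Pd, hset, finsum_mem_coe_finset, Finset.sum_image (fun x _ y _ h => hinj h),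
    Finset.sum_filter, Fintype.sum_prod_type]
  refine Finset.sum_eq_zero ?_
  intro b _hb
  by_cases hb : b = 0
  · -- b = 0 : no irreducible polynomials of the form X² + c
    subst hb
    refine Finset.sum_eq_zero ?_
    intro c _hc
    rw [if_neg]
    intro hirr
    set s : Fq := c ^ (2 ^ (m - 1)) with hs
    have hss : s * s = c := by
      rw [hs, ← pow_add, ← two_mul, ← pow_succ']
      have hm1 : 2 ^ (m - 1 + 1) = 2 ^ m := by congr 1; omega
      rw [hm1, ← hcard]
      exact FiniteField.pow_card c
    refine ((hmon (0, c)).not_irreducible_iff_exists_add_mul_eq_coeff (hdeg (0, c))).mpr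
      ⟨s, s, ?_, ?_⟩ hirr
    · simp only [hf]
      simpa using hss.symm
    · simp only [hf]
      have : (X ^ 2 + C (0:Fq) * X + C c).coeff 1 = 0 := by simp [coeff_X_pow]
      rw [this]
      exact (CharTwo.add_self_eq_zero s).symm
  · -- b ≠ 0
    rw [← Finset.sum_filter]
    set g : Fq → Fq := fun x => x^2 + b*x with hg
    -- irreducibility criterion
    have hcrit : ∀ c : Fq, ¬ Irreducible (f (b, c)) ↔ c ∈ univ.image g := by
      intro c
      rw [(hmon (b,c)).not_irreducible_iff_exists_add_mul_eq_coeff (hdeg (b,c))]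
      have hc0 : (f (b,c)).coeff 0 = c := by simp [hf]
      have hc1 : (f (b,c)).coeff 1 = b := by simp [hf, coeff_X_pow]
      rw [hc0, hc1]
      simp only [Finset.mem_image, Finset.mem_univ, true_and]
      constructor
      · rintro ⟨a, d, hmul, hadd⟩
        refine ⟨a, ?_⟩
        simp only [hg]
        rw [hmul, hadd]
        ring_nf
        linear_combination a^2 * h2
      · rintro ⟨x, hx⟩
        refine ⟨x, x + b, ?_, ?_⟩
        · rw [← hx]; simp only [hg]; ring_nf
        · linear_combination (-x) * h2
    -- fibers of g have two elements, hence the image has size 2^(m-1)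
    have hfib : ∀ c ∈ univ.image g, (univ.filter (fun x => g x = c)).card = 2 := by
      intro c hc
      obtain ⟨x0, -, rfl⟩ := Finset.mem_image.mp hc
      have heq : univ.filter (fun x => g x = g x0) = {x0, x0 + b} := by
        ext x
        simp only [Finset.mem_filter, Finset.mem_univ, true_and, Finset.mem_insert,
          Finset.mem_singleton]
        constructor
        · intro h
          have hfac : (x + x0) * (x + x0 + b) = 0 := by
            have hsub := sub_eq_zero.mpr h
            simp only [hg] at hsub ⊢
            linear_combination hsub + (x*x0 + x0*b + x0^2)*h2
          rcases mul_eq_zero.mp hfac with h' | h'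
          · left; exact haddcancel _ _ h'
          · right
            have : x + (x0 + b) = 0 := by linear_combination h'
            exact haddcancel _ _ this
        · rintro (rfl | rfl)
          · rfl
          · simp only [hg]
            ring_nf
            linear_combination (x0*b + b^2)*h2
      rw [heq, Finset.card_insert_of_notMem (by simp [hb, eq_comm]), Finset.card_singleton]
    have hcard2 : (univ.image g).card * 2 = Fintype.card Fq := by
      have h' := Finset.card_eq_sum_card_image g (univ : Finset Fq)
      rw [Finset.card_univ] at h'
      rw [h', Finset.sum_congr rfl hfib, Finset.sum_const, smul_eq_mul]
    have hcardim : (univ.image g).card = 2^(m-1) := by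
      have hpow : (univ.image g).card * 2 = 2^(m-1) * 2 := by
        rw [hcard2, hcard]
        have hm1 : m - 1 + 1 = m := by omega
        rw [← pow_succ, hm1]
      omega
    -- sum of the image of g is zero
    have hsumim : ∑ c ∈ univ.image g, c = 0 := by
      set H : AddSubgroup Fq :=
        { carrier := {c | ∃ x, g x = c}
          zero_mem' := ⟨0, by simp [hg]⟩
          add_mem' := by
            rintro c₁ c₂ ⟨x, rfl⟩ ⟨y, rfl⟩
            refine ⟨x + y, ?_⟩
            simp only [hg]
            ring_nf
            linear_combination (x*y) * h2
          neg_mem' := by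
            rintro c ⟨x, rfl⟩
            exact ⟨x, (CharTwo.neg_eq _).symm⟩ } with hH
      have hmem : ∀ c, c ∈ univ.image g ↔ c ∈ H := by
        intro c
        simp only [Finset.mem_image, Finset.mem_univ, true_and]
        exact Iff.rfl
      haveI instH : Fintype H := Fintype.ofFinset (univ.image g) hmem
      haveI : Module (ZMod 2) H := AddCommGroup.zmodModule (n := 2) (by
        intro x
        have h0 : ((2 • x : H) : Fq) = 0 := by
          push_cast
          rw [two_smul]
          exact CharTwo.add_self_eq_zero _
        exact Subtype.ext h0)
      have hcardH : Fintype.card H = (univ.image g).card := Fintype.card_of_subtype _ hmem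
      have h4 : 4 ≤ Fintype.card H := by
        rw [hcardH, hcardim]
        calc (4:ℕ) = 2^2 := by norm_num
        _ ≤ 2^(m-1) := Nat.pow_le_pow_right (by norm_num) (by omega)
      have hsum : (∑ x : H, x) = 0 := sum_univ_eq_zero_of_card H h4
      have hconv : ∑ c ∈ univ.image g, c = ((∑ x : H, x : H) : Fq) := by
        rw [Finset.sum_subtype _ hmem]
        push_cast
        rfl
      rw [hconv, hsum]
      rfl
    -- sum over all of Fq is zero
    have hsumuniv : ∑ c : Fq, c = 0 := by
      letI : Module (ZMod 2) Fq := AddCommGroup.zmodModule (n := 2) (by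
        intro x
        rw [two_smul]
        exact CharTwo.add_self_eq_zero _)
      refine sum_univ_eq_zero_of_card Fq ?_
      rw [hcard]
      calc (4:ℕ) = 2^2 := by norm_num
      _ ≤ 2^m := Nat.pow_le_pow_right (by norm_num) (by omega)
    -- the set of c giving irreducible polynomials
    have hSb : univ.filter (fun c : Fq => Irreducible (f (b, c))) = univ \ (univ.image g) := by
      ext c
      simp only [Finset.mem_filter, Finset.mem_univ, true_and, Finset.mem_sdiff]
      rw [← not_iff_not]
      simp only [not_not, hcrit c]
    -- sum of polynomials over irreducible c is zero
    have hpolysum : ∑ c ∈ univ.filter (fun c : Fq => Irreducible (f (b, c))), f (b, c) = 0 := by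
      have hsplit : ∀ c : Fq, f (b, c) = (X^2 + C b * X) + C c := by
        intro c; simp [hf]
      rw [Finset.sum_congr rfl (fun c _ => hsplit c), Finset.sum_add_distrib,
        Finset.sum_const, ← map_sum]
      have hsumc : ∑ c ∈ univ.filter (fun c : Fq => Irreducible (f (b, c))), c = 0 := by
        rw [hSb, Finset.sum_sdiff_eq_sub (Finset.subset_univ _), hsumuniv, hsumim, sub_zero]
      have hcardSb : (univ.filter (fun c : Fq => Irreducible (f (b, c)))).card = 2 * 2^(m-2) := by
        rw [hSb, Finset.card_sdiff_of_subset (Finset.subset_univ _), Finset.card_univ, hcardim]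
        have e1 : Fintype.card Fq = 2^(m-1) * 2 := by rw [← hcard2, hcardim]
        have e2 : (2:ℕ)^(m-1) = 2 * 2^(m-2) := by
          rw [← pow_succ']
          congr 1
          omega
        omega
      rw [hsumc, map_zero, add_zero, hcardSb, mul_smul]
      have : (2 : ℕ) • ((2:ℕ)^(m-2) • (X^2 + C b * X : Polynomial Fq)) = 0 := by
        rw [two_smul]
        exact CharTwo.add_self_eq_zero _
      exact this
    -- the rational function identity
    set D : Polynomial Fq := (X^(Fintype.card Fq ^ n) + X) * (X^(Fintype.card Fq ^ n) + X + C b) with hD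
    have hfrobP : ∀ c : Fq, (f (b,c)) ^ (Fintype.card Fq ^ n) = f (b,c) + D := by
      intro c
      have hQmn : Fintype.card Fq ^ n = 2 ^ (m * n) := by rw [hcard, ← pow_mul]
      have h2p : (2 : Polynomial Fq) = 0 := by
        exact_mod_cast CharP.cast_eq_zero (Polynomial Fq) 2
      have hbpow : b ^ (2:ℕ) ^ (m*n) = b := by
        rw [← hQmn]; exact FiniteField.pow_card_pow n b
      have hcpow : c ^ (2:ℕ) ^ (m*n) = c := by
        rw [← hQmn]; exact FiniteField.pow_card_pow n c
      rw [hQmn]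
      simp only [hf, hD, hQmn]
      rw [add_pow_char_pow, add_pow_char_pow, mul_pow, ← map_pow, ← map_pow, hbpow, hcpow]
      linear_combination (-(X^2 + C b * X + X^(2^(m*n)+1)) : Polynomial Fq) * h2p
    -- now in RatFunc
    set π : Fq → RatFunc Fq := fun c => algebraMap (Polynomial Fq) (RatFunc Fq) (f (b, c))
      with hπdef
    set δ : RatFunc Fq := algebraMap (Polynomial Fq) (RatFunc Fq) D with hδdef
    haveI : CharP (RatFunc Fq) 2 :=
      charP_of_injective_algebraMap (RatFunc.algebraMap_injective Fq) 2
    have hDne : D ≠ 0 := by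
      have hfac1 : (X^(Fintype.card Fq ^ n) + X : Polynomial Fq) ≠ 0 := by
        rw [← CharTwo.sub_eq_add]
        exact FiniteField.X_pow_card_sub_X_ne_zero Fq (by omega)
      have hfac2 : (X^(Fintype.card Fq ^ n) + X + C b : Polynomial Fq) ≠ 0 := by
        intro h0
        have hco := congrArg (fun p => Polynomial.coeff p (Fintype.card Fq ^ n)) h0
        have hN1 : ¬ ((1:ℕ) = Fintype.card Fq ^ n) := by omega
        have hN0 : ¬ (Fintype.card Fq ^ n = 0) := by omega
        simp only [coeff_add, coeff_X_pow, coeff_X, coeff_C, coeff_zero, if_pos rfl,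
          if_neg hN1, if_neg hN0, add_zero] at hco
        exact one_ne_zero hco
      rw [hD]
      exact mul_ne_zero hfac1 hfac2
    have hδne : δ ≠ 0 := by
      simp only [hδdef]
      intro h0
      exact hDne (RatFunc.algebraMap_injective Fq (by rw [h0, map_zero]))
    have hterm : ∀ c ∈ univ.filter (fun c : Fq => Irreducible (f (b, c))),
        (1 - π c ^ k)⁻¹ = π c * δ⁻¹ := by
      intro c _hc
      have hπne : π c ≠ 0 := by
        simp only [hπdef]
        intro h0
        exact (hmon (b,c)).ne_zero (RatFunc.algebraMap_injective Fq (by rw [h0, map_zero]))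
      have hfr : π c ^ (Fintype.card Fq ^ n) = π c + δ := by
        simp only [hπdef, hδdef]
        rw [← map_pow, hfrobP c, map_add]
      have h1 : (1 - π c ^ k) * π c = δ := by
        have hp : π c ^ k * π c = π c + δ := by
          rw [← pow_succ, ← hqn]; exact hfr
        calc (1 - π c ^ k) * π c = π c - π c ^ k * π c := by ring
        _ = π c - (π c + δ) := by rw [hp]
        _ = -δ := by ring
        _ = δ := CharTwo.neg_eq _
      have h1mk : 1 - π c ^ k = δ * (π c)⁻¹ := by
        rw [eq_mul_inv_iff_mul_eq₀ hπne]; exact h1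
      rw [h1mk, mul_inv, inv_inv, mul_comm]
    calc ∑ c ∈ univ.filter (fun c : Fq => Irreducible (f (b, c))),
          (1 - algebraMap (Polynomial Fq) (RatFunc Fq) (f (b, c)) ^ k)⁻¹
        = ∑ c ∈ univ.filter (fun c : Fq => Irreducible (f (b, c))), π c * δ⁻¹ :=
          Finset.sum_congr rfl hterm
      _ = (∑ c ∈ univ.filter (fun c : Fq => Irreducible (f (b, c))), π c) * δ⁻¹ := by
          rw [Finset.sum_mul]
      _ = 0 := by
          simp only [hπdef]
          rw [← map_sum, hpolysum, map_zero, zero_mul]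
end
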